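/- arXiv:1404.4854 — 5 statements merged into one kernel-verified Lean document; each statement's English description precedes it below -/
import Mathlib

section
/- Let m ∈ ℕ, ε₀ > 0, and let h : ℝ × ℝ^m → ℝ be smooth on an open neighborhood of K_{ε₀} and such that for every k ∈ ℕ and every multi-index α there is a constant c_{kα} > 0 with |∂_r^k ∂_z^α h(r,z)| ≤ c_{kα} for all (r,z) ∈ K_{ε₀}. If there is c > 0 such that |h(r,z)| ≤ c·r for all (r,z) ∈ K_{ε₀}, then for every k ∈ ℕ there is a constant c_k > 0 such that |∂_r^k (h(r,z)/r)| ≤ c_k for all (r,z) ∈ K_{ε₀} with r > 0. -/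
/-- Partial derivative in the radial variable `r` of a function `h(r, z)`. -/
noncomputable def pr {m : ℕ} (h : ℝ × (Fin m → ℝ) → ℝ) : ℝ × (Fin m → ℝ) → ℝ :=
  fun p => deriv (fun t => h (t, p.2)) p.1

/-- Partial derivative in the variable `z i` of a function `h(r, z)`. -/
noncomputable def pzi {m : ℕ} (i : Fin m) (h : ℝ × (Fin m → ℝ) → ℝ) :
    ℝ × (Fin m → ℝ) → ℝ :=
  fun p => deriv (fun t => h (p.1, Function.update p.2 i t)) (p.2 i)

/-- Iterated partial derivatives in the `z` variables according to the
multi-index recorded by the list `αs` of coordinate indices. -/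
noncomputable def pz {m : ℕ} (αs : List (Fin m)) (h : ℝ × (Fin m → ℝ) → ℝ) :
    ℝ × (Fin m → ℝ) → ℝ :=
  αs.foldr pzi h

/-- `K_ε = {(r,z) : r ≥ 0, (r² + |z|²)^{1/2} ≤ ε}` with `|z|` the Euclidean norm. -/
def Kset (m : ℕ) (ε : ℝ) : Set (ℝ × (Fin m → ℝ)) :=
  {p | 0 ≤ p.1 ∧ Real.sqrt (p.1 ^ 2 + ∑ i, p.2 i ^ 2) ≤ ε}

lemma pr_iterate_apply {m : ℕ} (k : ℕ) (F : ℝ × (Fin m → ℝ) → ℝ) (r : ℝ) (z : Fin m → ℝ) :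
    (pr)^[k] F (r, z) = deriv^[k] (fun t => F (t, z)) r := by
  induction k generalizing F with
  | zero => rfl
  | succ n ih =>
    rw [Function.iterate_succ_apply, Function.iterate_succ_apply, ih (pr F)]
    rfl

lemma iter_deriv_eventuallyEq {f g : ℝ → ℝ} {x : ℝ} (n : ℕ) (h : f =ᶠ[nhds x] g) :
    deriv^[n] f =ᶠ[nhds x] deriv^[n] g := by
  induction n with
  | zero => exact h
  | succ n ih =>
    rw [Function.iterate_succ']
    exact ih.deriv

theorem stmt0 (m : ℕ) (ε₀ : ℝ) (hε₀ : 0 < ε₀) (h : ℝ × (Fin m → ℝ) → ℝ)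
    (U : Set (ℝ × (Fin m → ℝ))) (hU : IsOpen U) (hKU : Kset m ε₀ ⊆ U)
    (hsmooth : ContDiffOn ℝ (⊤ : ℕ∞) h U)
    (hder : ∀ (k : ℕ) (αs : List (Fin m)), ∃ c > (0 : ℝ), ∀ p ∈ Kset m ε₀,
      |(pr)^[k] (pz αs h) p| ≤ c)
    (c : ℝ) (hc : 0 < c) (hbound : ∀ p ∈ Kset m ε₀, |h p| ≤ c * p.1) :
    ∀ k : ℕ, ∃ ck > (0 : ℝ), ∀ p ∈ Kset m ε₀, 0 < p.1 →
      |(pr)^[k] (fun q => h q / q.1) p| ≤ ck := by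
  intro k
  obtain ⟨ck, hck, hckb⟩ := hder (k + 1) []
  refine ⟨ck, hck, ?_⟩
  rintro ⟨r, z⟩ hp hr
  set Z : ℝ := ∑ i, z i ^ 2 with hZdef
  have hZ0 : 0 ≤ Z := by positivity
  have hle : r ^ 2 + Z ≤ ε₀ ^ 2 := by
    have h1 : Real.sqrt (r ^ 2 + Z) ≤ ε₀ := hp.2
    have h2 : Real.sqrt (r ^ 2 + Z) ^ 2 = r ^ 2 + Z := Real.sq_sqrt (by positivity)
    nlinarith [Real.sqrt_nonneg (r ^ 2 + Z)]
  set s : ℝ := Real.sqrt (ε₀ ^ 2 - Z) with hsdef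
  have hs2 : s ^ 2 = ε₀ ^ 2 - Z := Real.sq_sqrt (by nlinarith)
  have hs0 : 0 ≤ s := Real.sqrt_nonneg _
  have hrs : r ≤ s := by
    rw [hsdef]
    rw [show r = Real.sqrt (r ^ 2) by rw [Real.sqrt_sq hr.le]]
    exact Real.sqrt_le_sqrt (by nlinarith)
  have hKmem : ∀ t : ℝ, 0 ≤ t → t ≤ s → (t, z) ∈ Kset m ε₀ := by
    intro t h0 hts
    refine ⟨h0, ?_⟩
    have ht2 : t ^ 2 ≤ s ^ 2 := by nlinarith
    calc Real.sqrt (t ^ 2 + Z) ≤ Real.sqrt (ε₀ ^ 2) := Real.sqrt_le_sqrt (by nlinarith)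
    _ = ε₀ := Real.sqrt_sq hε₀.le
  set f : ℝ → ℝ := fun t => h (t, z) with hfdef
  set V : Set ℝ := (fun t => ((t, z) : ℝ × (Fin m → ℝ))) ⁻¹' U with hVdef
  have hVopen : IsOpen V := hU.preimage (continuous_id.prodMk continuous_const)
  have hIccV : Set.Icc 0 s ⊆ V := fun t ht => hKU (hKmem t ht.1 ht.2)
  obtain ⟨δ, hδ, hball⟩ := Metric.isOpen_iff.1 hVopen s (hIccV ⟨hs0, le_rfl⟩)
  set b : ℝ := s + δ / 2 with hbdef
  have hsb : s < b := by simp [hbdef]; linarith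
  have h0b : 0 < b := lt_of_le_of_lt (le_trans hr.le hrs) hsb
  have hbV : Set.Icc 0 b ⊆ V := by
    intro t ht
    rcases le_or_gt t s with h1 | h1
    · exact hIccV ⟨ht.1, h1⟩
    · apply hball
      rw [Metric.mem_ball, Real.dist_eq, abs_of_nonneg (by linarith)]
      have := ht.2
      rw [hbdef] at this
      linarith
  -- smoothness of the slice
  have hfV : ContDiffOn ℝ (⊤ : ℕ∞) f V := by
    exact hsmooth.comp ((contDiff_id.prodMk contDiff_const).contDiffOn) (fun t ht => ht)
  have hDall : ∀ j : ℕ, ContDiffOn ℝ (⊤ : ℕ∞) (deriv^[j] f) V := by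
    intro j
    induction j with
    | zero => exact hfV
    | succ n ih =>
      rw [Function.iterate_succ_apply']
      exact ih.deriv_of_isOpen hVopen (mod_cast le_top)
  have hHD : ∀ (j : ℕ), ∀ t ∈ V, HasDerivAt (deriv^[j] f) (deriv^[j + 1] f t) t := by
    intro j t ht
    have hd : DifferentiableAt ℝ (deriv^[j] f) t :=
      ((hDall j).differentiableOn (by simp)).differentiableAt (hVopen.mem_nhds ht)
    rw [Function.iterate_succ_apply']
    exact hd.hasDerivAt
  have hCont : ∀ j : ℕ, ContinuousOn (deriv^[j] f) V := fun j => (hDall j).continuousOn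
  -- bound from hder
  have hDb : ∀ t : ℝ, 0 ≤ t → t ≤ s → |deriv^[k + 1] f t| ≤ ck := by
    intro t h0 hts
    have := hckb (t, z) (hKmem t h0 hts)
    rwa [show pz [] h = h from rfl, pr_iterate_apply] at this
  -- the smoothed integral representation
  set G : ℝ → ℝ := fun x => ∫ t in (0:ℝ)..1, deriv f (t * x) with hGdef
  have hIoc : Set.uIoc (0:ℝ) 1 = Set.Ioc 0 1 := Set.uIoc_of_le zero_le_one
  have hmulmem : ∀ t ∈ Set.Icc (0:ℝ) 1, ∀ x ∈ Set.Ioo (0:ℝ) b, t * x ∈ Set.Icc 0 b := by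
    intro t ht x hx
    refine ⟨mul_nonneg ht.1 hx.1.le, ?_⟩
    calc t * x ≤ 1 * x := mul_le_mul_of_nonneg_right ht.2 hx.1.le
    _ = x := one_mul x
    _ ≤ b := hx.2.le
  have hcont2 : ∀ (i l : ℕ), ∀ x ∈ Set.Ioo (0:ℝ) b,
      ContinuousOn (fun t : ℝ => t ^ i * deriv^[l] f (t * x)) (Set.Icc 0 1) := by
    intro i l x hx
    refine ContinuousOn.mul ((continuous_pow i).continuousOn) ?_
    refine ((hCont l).comp ((continuous_mul_right x).continuousOn) ?_)
    intro t ht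
    exact hbV (hmulmem t ht x hx)
  have hasD : ∀ (j : ℕ), ∀ ρ ∈ Set.Ioo (0:ℝ) b,
      HasDerivAt (fun x => ∫ t in (0:ℝ)..1, t ^ j * deriv^[j + 1] f (t * x))
        (∫ t in (0:ℝ)..1, t ^ (j + 1) * deriv^[j + 2] f (t * ρ)) ρ := by
    intro j ρ hρ
    obtain ⟨M, hM⟩ := isCompact_Icc.exists_bound_of_continuousOn ((hCont (j + 2)).mono hbV)
    set ε : ℝ := min ρ (b - ρ) with hεdef
    have hε : 0 < ε := lt_min hρ.1 (by linarith [hρ.2])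
    have hballsub : Metric.ball ρ ε ⊆ Set.Ioo 0 b := by
      intro x hx
      rw [Metric.mem_ball, Real.dist_eq] at hx
      have h1 := abs_lt.1 hx
      have h2 : ε ≤ ρ := min_le_left _ _
      have h3 : ε ≤ b - ρ := min_le_right _ _
      exact ⟨by linarith [h1.1], by linarith [h1.2]⟩
    have hmeas : ∀ (i l : ℕ), ∀ x ∈ Set.Ioo (0:ℝ) b,
        MeasureTheory.AEStronglyMeasurable (fun t : ℝ => t ^ i * deriv^[l] f (t * x))
          (MeasureTheory.volume.restrict (Set.uIoc (0:ℝ) 1)) := by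
      intro i l x hx
      rw [hIoc]
      exact ((hcont2 i l x hx).mono Set.Ioc_subset_Icc_self).aestronglyMeasurable
        measurableSet_Ioc
    have hM0 : 0 ≤ M := le_trans (norm_nonneg _) (hM 0 ⟨le_rfl, h0b.le⟩)
    refine (intervalIntegral.hasDerivAt_integral_of_dominated_loc_of_deriv_le
      (F := fun x t => t ^ j * deriv^[j + 1] f (t * x))
      (F' := fun x t => t ^ (j + 1) * deriv^[j + 2] f (t * x))
      (bound := fun _ => M) (Metric.ball_mem_nhds ρ hε) ?_ ?_ ?_ ?_ ?_ ?_).2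
    · exact Filter.eventually_of_mem (Metric.ball_mem_nhds ρ hε)
        (fun x hx => hmeas j (j + 1) x (hballsub hx))
    · apply ContinuousOn.intervalIntegrable
      rw [Set.uIcc_of_le zero_le_one]
      exact hcont2 j (j + 1) ρ hρ
    · exact hmeas (j + 1) (j + 2) ρ hρ
    · refine MeasureTheory.ae_of_all _ (fun t ht x hx => ?_)
      rw [hIoc] at ht
      have h1 : t * x ∈ Set.Icc 0 b := hmulmem t (Set.Ioc_subset_Icc_self ht) x (hballsub hx)
      have h2 := hM (t * x) h1
      rw [Real.norm_eq_abs] at h2 ⊢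
      rw [abs_mul, abs_pow]
      have h4 : |t| ^ (j + 1) ≤ 1 :=
        pow_le_one₀ (abs_nonneg t) (abs_le.2 ⟨by linarith [ht.1], ht.2⟩)
      calc |t| ^ (j + 1) * |deriv^[j + 2] f (t * x)| ≤ 1 * M :=
            mul_le_mul h4 h2 (abs_nonneg _) zero_le_one
      _ = M := one_mul M
    · exact intervalIntegrable_const
    · refine MeasureTheory.ae_of_all _ (fun t ht x hx => ?_)
      rw [hIoc] at ht
      have hmem : t * x ∈ V :=
        hbV (hmulmem t (Set.Ioc_subset_Icc_self ht) x (hballsub hx))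
      have h1 : HasDerivAt (fun y : ℝ => t * y) t x := by
        simpa using (hasDerivAt_id x).const_mul t
      have h2 := ((hHD (j + 1) (t * x) hmem).comp x h1).const_mul (t ^ j)
      exact h2.congr_deriv (by ring)
  have key : ∀ (j : ℕ), ∀ ρ ∈ Set.Ioo (0:ℝ) b,
      deriv^[j] G ρ = ∫ t in (0:ℝ)..1, t ^ j * deriv^[j + 1] f (t * ρ) := by
    intro j
    induction j with
    | zero =>
      intro ρ hρ
      simp only [Function.iterate_zero, id_eq, pow_zero, one_mul, hGdef]
      rfl
    | succ n ih =>
      intro ρ hρ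
      rw [Function.iterate_succ_apply']
      have hev : deriv^[n] G =ᶠ[nhds ρ]
          fun x => ∫ t in (0:ℝ)..1, t ^ n * deriv^[n + 1] f (t * x) :=
        Filter.eventuallyEq_of_mem (isOpen_Ioo.mem_nhds hρ) ih
      rw [hev.deriv_eq]
      exact (hasD n ρ hρ).deriv
  have hf0 : f 0 = 0 := by
    have h1 := hbound (0, z) (hKmem 0 le_rfl hs0)
    simp only [mul_zero] at h1
    exact abs_eq_zero.1 (le_antisymm h1 (abs_nonneg _))
  have hGf : Set.EqOn (fun t => f t / t) G (Set.Ioo 0 b) := by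
    intro ρ hρ
    have hρ0 : (ρ : ℝ) ≠ 0 := ne_of_gt hρ.1
    have hIccρ : Set.Icc 0 ρ ⊆ V := fun t ht => hbV ⟨ht.1, le_trans ht.2 hρ.2.le⟩
    have huIcc : Set.uIcc (0:ℝ) ρ = Set.Icc 0 ρ := Set.uIcc_of_le hρ.1.le
    have hftc : ∫ u in (0:ℝ)..ρ, deriv f u = f ρ - f 0 := by
      apply intervalIntegral.integral_deriv_eq_sub
      · intro x hx
        rw [huIcc] at hx
        exact ((hfV.differentiableOn (by simp)).differentiableAt
          (hVopen.mem_nhds (hIccρ hx)))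
      · apply ContinuousOn.intervalIntegrable
        rw [huIcc]
        have := (hCont 1).mono hIccρ
        simpa using this
    show f ρ / ρ = G ρ
    rw [hGdef]
    show f ρ / ρ = ∫ t in (0:ℝ)..1, deriv f (t * ρ)
    rw [intervalIntegral.integral_comp_mul_right (fun u => deriv f u) hρ0]
    rw [zero_mul, one_mul, hftc, hf0, smul_eq_mul, sub_zero]
    field_simp
  have hslice : (pr)^[k] (fun q => h q / q.1) (r, z) = deriv^[k] (fun t => f t / t) r :=
    pr_iterate_apply k _ r z
  have hrIoo : r ∈ Set.Ioo (0:ℝ) b := ⟨hr, lt_of_le_of_lt hrs hsb⟩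
  have hev2 : (fun t => f t / t) =ᶠ[nhds r] G :=
    Filter.eventuallyEq_of_mem (isOpen_Ioo.mem_nhds hrIoo) hGf
  rw [hslice, (iter_deriv_eventuallyEq k hev2).eq_of_nhds, key k r hrIoo]
  have hbnd : ∀ t ∈ Set.uIoc (0:ℝ) 1, ‖t ^ k * deriv^[k + 1] f (t * r)‖ ≤ ck := by
    intro t ht
    rw [hIoc] at ht
    have h1 : 0 ≤ t * r := mul_nonneg ht.1.le hr.le
    have h2 : t * r ≤ s := by
      calc t * r ≤ 1 * r := mul_le_mul_of_nonneg_right ht.2 hr.le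
      _ = r := one_mul r
      _ ≤ s := hrs
    have h3 := hDb (t * r) h1 h2
    rw [Real.norm_eq_abs, abs_mul, abs_pow]
    have h4 : |t| ^ k ≤ 1 := pow_le_one₀ (abs_nonneg t) (abs_le.2 ⟨by linarith [ht.1], ht.2⟩)
    calc |t| ^ k * |deriv^[k + 1] f (t * r)| ≤ 1 * ck :=
          mul_le_mul h4 h3 (abs_nonneg _) zero_le_one
    _ = ck := one_mul ck
  have hfin := intervalIntegral.norm_integral_le_of_norm_le_const hbnd
  simpa [Real.norm_eq_abs] using hfin
end

section
/- Let m ∈ ℕ, ε₀ > 0, l ∈ ℕ with l ≥ 1, and let h : ℝ × ℝ^m → ℝ be smooth on an open neighborhood of K_{ε₀} and such that for every k ∈ ℕ and every multi-index α there is a constant c_{kα} > 0 with |∂_r^k ∂_z^α h(r,z)| ≤ c_{kα} for all (r,z) ∈ K_{ε₀}. Set f(r,z) = r^{-l} h(r,z) for r > 0, and assume there is c > 0 such that |f(r,z)| ≤ c for all (r,z) ∈ K_{ε₀} with r > 0. Then for every k ∈ ℕ there is a constant c_k > 0 such that |∂_r^k f(r,z)| ≤ c_k for all (r,z) ∈ K_{ε₀}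 with r > 0. -/
open Filter Set


lemma pr_iterate {m : ℕ} (k : ℕ) (g : ℝ × (Fin m → ℝ) → ℝ) (r : ℝ) (z : Fin m → ℝ) :
    (pr)^[k] g (r, z) = deriv^[k] (fun t => g (t, z)) r := by
  induction k generalizing g with
  | zero => rfl
  | succ k ih =>
    rw [Function.iterate_succ_apply, Function.iterate_succ_apply]
    exact ih (pr g)

lemma iter_deriv_eventuallyEq_s1 {f g : ℝ → ℝ} {r : ℝ} (hfg : f =ᶠ[nhds r] g) :
    ∀ k, deriv^[k] f =ᶠ[nhds r] deriv^[k] g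
  | 0 => hfg
  | (k+1) => by
    simpa only [Function.iterate_succ_apply'] using (iter_deriv_eventuallyEq_s1 hfg k).deriv

lemma contDiffOn_iter_deriv {u : ℝ → ℝ} {I : Set ℝ} (hI : IsOpen I)
    (hu : ContDiffOn ℝ (⊤ : ℕ∞) u I) : ∀ n, ContDiffOn ℝ (⊤ : ℕ∞) (deriv^[n] u) I
  | 0 => hu
  | (n+1) => by
    rw [Function.iterate_succ_apply']
    exact (contDiffOn_iter_deriv hI hu n).deriv_of_isOpen hI (by simp)

lemma diff_iter {u : ℝ → ℝ} {I : Set ℝ} (hI : IsOpen I)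
    (hu : ContDiffOn ℝ (⊤ : ℕ∞) u I) (n : ℕ) {t : ℝ} (ht : t ∈ I) :
    DifferentiableAt ℝ (deriv^[n] u) t :=
  ((contDiffOn_iter_deriv hI hu n).differentiableOn (by simp)).differentiableAt (hI.mem_nhds ht)

lemma iteratedDerivWithin_Icc_eq {u : ℝ → ℝ} {I : Set ℝ} (hI : IsOpen I)
    (hu : ContDiffOn ℝ (⊤ : ℕ∞) u I) {a b : ℝ} (hab : a < b) (hsub : Icc a b ⊆ I)
    {x : ℝ} (hx : x ∈ Icc a b) (n : ℕ) :
    iteratedDerivWithin n u (Icc a b) x = deriv^[n] u x := by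
  have h1 : iteratedFDerivWithin ℝ n u (Icc a b) x = iteratedFDeriv ℝ n u x := by
    have ht := (hu.ftaylorSeriesWithin hI.uniqueDiffOn).mono hsub
    have h2 := ht.eq_iteratedFDerivWithin_of_uniqueDiffOn (m := n) (mod_cast le_top) (uniqueDiffOn_Icc hab) hx
    rw [← h2]
    exact iteratedFDerivWithin_of_isOpen n hI (hsub hx)
  rw [iteratedDerivWithin_eq_iteratedFDerivWithin, h1, ← iteratedDeriv,
    iteratedDeriv_eq_iterate]

lemma taylor_bound {u : ℝ → ℝ} {I : Set ℝ} (hI : IsOpen I)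
    (hu : ContDiffOn ℝ (⊤ : ℕ∞) u I) {ρ : ℝ} (hsub : Icc 0 ρ ⊆ I) (n : ℕ)
    (hvan : ∀ i ≤ n, deriv^[i] u 0 = 0)
    {B : ℝ} (hB : ∀ t ∈ Icc 0 ρ, |deriv^[n+1] u t| ≤ B)
    {r : ℝ} (hr : r ∈ Ioc 0 ρ) :
    |u r| ≤ B * r^(n+1) / (n+1).factorial := by
  have h0r : (0:ℝ) < r := hr.1
  have hsub' : Icc (0:ℝ) r ⊆ I := (Icc_subset_Icc le_rfl hr.2).trans hsub
  have hconv : ∀ i : ℕ, ∀ x ∈ Icc (0:ℝ) r,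
      iteratedDerivWithin i u (Icc 0 r) x = deriv^[i] u x :=
    fun i x hx => iteratedDerivWithin_Icc_eq hI hu h0r hsub' hx i
  obtain ⟨ξ, hξ, heq⟩ := by
   have H := taylor_mean_remainder_lagrange (f := u) (x₀ := 0) (x := r) (n := n) h0r.ne
   rw [uIcc_of_le h0r.le, uIoo_of_le h0r.le] at H
   exact H
    ((hu.mono hsub').of_le (mod_cast le_top))
    (by
      apply DifferentiableOn.congr (f := deriv^[n] u)
        (fun x hx => (diff_iter hI hu n (hsub' (Ioo_subset_Icc_self hx))).differentiableWithinAt)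
      intro x hx
      exact hconv n x (Ioo_subset_Icc_self hx))
  have hT : taylorWithinEval u n (Icc 0 r) 0 r = 0 := by
    rw [taylor_within_apply]
    apply Finset.sum_eq_zero
    intro i hi
    rw [hconv i 0 (left_mem_Icc.2 h0r.le), hvan i (Nat.lt_succ_iff.mp (Finset.mem_range.mp hi))]
    simp
  have hξ' : ξ ∈ Icc (0:ℝ) r := Ioo_subset_Icc_self hξ
  rw [hT, sub_zero, hconv (n+1) ξ hξ', sub_zero] at heq
  have h1 : |deriv^[n+1] u ξ| ≤ B := hB ξ (Icc_subset_Icc le_rfl hr.2 hξ')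
  rw [heq, abs_div, abs_mul, abs_pow, abs_of_pos h0r,
    abs_of_pos (by positivity : (0:ℝ) < ((n+1).factorial : ℝ))]
  gcongr

lemma phi_vanish {φ : ℝ → ℝ} {I : Set ℝ} (hI : IsOpen I)
    (hφ : ContDiffOn ℝ (⊤ : ℕ∞) φ I) {ρ c : ℝ} (hρ : 0 < ρ) (hsub : Icc 0 ρ ⊆ I)
    {l : ℕ} (M : ℕ → ℝ) (hM : ∀ n, ∀ t ∈ Icc 0 ρ, |deriv^[n] φ t| ≤ M n)
    (hc : 0 ≤ c) (hbd : ∀ t ∈ Ioc (0:ℝ) ρ, |φ t| ≤ c * t ^ l) :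
    ∀ j < l, deriv^[j] φ 0 = 0 := by
  intro j hj
  induction j using Nat.strong_induction_on with
  | _ j ih =>
  set a := deriv^[j] φ 0 with ha
  set ρ' : ℝ := min ρ 1 with hρ'
  have hρ'0 : 0 < ρ' := lt_min hρ one_pos
  have hM0 : 0 ≤ M (j+1) := (abs_nonneg _).trans (hM (j+1) 0 (left_mem_Icc.2 hρ.le))
  set D : ℝ := (j.factorial : ℝ) * (c + M (j+1)) with hD
  have key : ∀ t ∈ Ioc (0:ℝ) ρ', |a| ≤ D * t := by
    intro t ht
    have ht0 : 0 < t := ht.1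
    have htρ : t ≤ ρ := ht.2.trans (min_le_left _ _)
    have ht1 : t ≤ 1 := ht.2.trans (min_le_right _ _)
    have hsub' : Icc (0:ℝ) t ⊆ I := (Icc_subset_Icc le_rfl htρ).trans hsub
    have hconv : ∀ i : ℕ, ∀ x ∈ Icc (0:ℝ) t,
        iteratedDerivWithin i φ (Icc 0 t) x = deriv^[i] φ x :=
      fun i x hx => iteratedDerivWithin_Icc_eq hI hφ ht0 hsub' hx i
    obtain ⟨ξ, hξ, heq⟩ := by
     have H := taylor_mean_remainder_lagrange (f := φ) (x₀ := 0) (x := t) (n := j) ht0.ne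
     rw [uIcc_of_le ht0.le, uIoo_of_le ht0.le] at H
     exact H
      ((hφ.mono hsub').of_le (mod_cast le_top))
      (by
        apply DifferentiableOn.congr (f := deriv^[j] φ)
          (fun x hx => (diff_iter hI hφ j (hsub' (Ioo_subset_Icc_self hx))).differentiableWithinAt)
        intro x hx
        exact hconv j x (Ioo_subset_Icc_self hx))
    have hT : taylorWithinEval φ j (Icc 0 t) 0 t
        = ((j.factorial : ℝ)⁻¹ * t ^ j) * a := by
      rw [taylor_within_apply, Finset.sum_range_succ]
      rw [hconv j 0 (left_mem_Icc.2 ht0.le)]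
      have : ∀ i ∈ Finset.range j, ((i.factorial : ℝ)⁻¹ * (t - 0) ^ i) •
          iteratedDerivWithin i φ (Icc 0 t) 0 = 0 := by
        intro i hi
        rw [hconv i 0 (left_mem_Icc.2 ht0.le), ih i (Finset.mem_range.mp hi)
          (lt_trans (Finset.mem_range.mp hi) hj)]
        simp
      rw [Finset.sum_eq_zero this, zero_add, sub_zero]
      simp [ha, smul_eq_mul]
    have hξ' : ξ ∈ Icc (0:ℝ) t := Ioo_subset_Icc_self hξ
    rw [hT, hconv (j+1) ξ hξ', sub_zero] at heq
    -- φ t - (j!⁻¹ t^j) a = deriv^[j+1] φ ξ * t^(j+1)/(j+1)!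
    have hbound : |((j.factorial : ℝ)⁻¹ * t ^ j) * a| ≤ c * t ^ l
        + M (j+1) * t^(j+1) / (j+1).factorial := by
      have h1 : ((j.factorial : ℝ)⁻¹ * t ^ j) * a = φ t -
          deriv^[j+1] φ ξ * t ^ (j+1) / (j+1).factorial := by
        rw [← heq]; ring
      rw [h1]
      refine (abs_sub _ _).trans (add_le_add (hbd t ⟨ht0, htρ⟩) ?_)
      rw [abs_div, abs_mul, abs_pow, abs_of_pos ht0,
        abs_of_pos (by positivity : (0:ℝ) < ((j+1).factorial : ℝ))]
      gcongr
      exact hM (j+1) ξ (Icc_subset_Icc le_rfl htρ hξ')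
    -- now |a| * t^j / j! ≤ c t^l + M t^{j+1}/(j+1)!
    rw [abs_mul, abs_mul, abs_pow, abs_of_pos ht0, abs_of_nonneg
      (by positivity : (0:ℝ) ≤ (j.factorial : ℝ)⁻¹)] at hbound
    have hjl : j + 1 ≤ l := hj
    have hlt : c * t ^ l + M (j+1) * t^(j+1) / (j+1).factorial
        ≤ (c + M (j+1)) * t^(j+1) := by
      have h2 : t ^ l ≤ t ^ (j+1) := pow_le_pow_of_le_one ht0.le ht1 hjl
      have h3 : M (j+1) * t^(j+1) / (j+1).factorial ≤ M (j+1) * t^(j+1) := by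
        apply div_le_self (by positivity) (by exact_mod_cast Nat.factorial_pos (j+1))
      nlinarith [pow_nonneg ht0.le (j+1), pow_nonneg ht0.le l]
    have h4 : |a| * t ^ j ≤ (j.factorial : ℝ) * ((c + M (j+1)) * t^(j+1)) := by
      have h5 := hbound.trans hlt
      have h6 : (0:ℝ) < (j.factorial : ℝ) := by positivity
      calc |a| * t ^ j = (j.factorial : ℝ) * ((j.factorial : ℝ)⁻¹ * t ^ j * |a|) := by
            field_simp
        _ ≤ (j.factorial : ℝ) * ((c + M (j+1)) * t^(j+1)) := by
            apply mul_le_mul_of_nonneg_left h5 h6.le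
    have h8 : |a| ≤ (j.factorial : ℝ) * (c + M (j+1)) * t :=
      le_of_mul_le_mul_right (by rw [pow_succ] at h4; linarith) (pow_pos ht0 j)
    exact h8
  -- conclude a = 0
  have lim : Tendsto (fun t : ℝ => D * t) (nhdsWithin 0 (Ioi 0)) (nhds 0) := by
    have : Tendsto (fun t : ℝ => D * t) (nhds 0) (nhds (D * 0)) :=
      (continuous_const.mul continuous_id).tendsto 0
    rw [mul_zero] at this
    exact this.mono_left nhdsWithin_le_nhds
  have ev : ∀ᶠ t in nhdsWithin (0:ℝ) (Ioi 0), |a| ≤ D * t := by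
    filter_upwards [Ioc_mem_nhdsGT hρ'0] with t ht using key t ht
  have : |a| ≤ 0 := ge_of_tendsto lim ev
  exact abs_eq_zero.mp (le_antisymm this (abs_nonneg _))

noncomputable def Aseq (l : ℕ) (φ : ℝ → ℝ) : ℕ → ℝ → ℝ
  | 0 => φ
  | (k+1) => fun t => t * deriv (Aseq l φ k) t - ((l : ℝ) + k) * Aseq l φ k t

lemma Aseq_contDiffOn {φ : ℝ → ℝ} {I : Set ℝ} (hI : IsOpen I)
    (hφ : ContDiffOn ℝ (⊤ : ℕ∞) φ I) (l : ℕ) :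
    ∀ k, ContDiffOn ℝ (⊤ : ℕ∞) (Aseq l φ k) I
  | 0 => hφ
  | (k+1) => by
    have ih := Aseq_contDiffOn hI hφ l k
    exact (contDiffOn_id.mul (ih.deriv_of_isOpen hI (by simp))).sub
      (contDiffOn_const.mul ih)

lemma deriv_iter_Aseq {φ : ℝ → ℝ} {I : Set ℝ} (hI : IsOpen I)
    (hφ : ContDiffOn ℝ (⊤ : ℕ∞) φ I) (l k : ℕ) :
    ∀ i, ∀ t ∈ I, deriv^[i] (Aseq l φ (k+1)) t
      = t * deriv^[i+1] (Aseq l φ k) t + ((i : ℝ) - ((l : ℝ) + k)) * deriv^[i] (Aseq l φ k) t := by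
  intro i
  induction i with
  | zero =>
    intro t _
    show Aseq l φ (k+1) t = _
    show t * deriv (Aseq l φ k) t - ((l : ℝ) + k) * Aseq l φ k t = _
    push_cast
    ring_nf
    rfl
  | succ i ih =>
    intro t ht
    have hsm := Aseq_contDiffOn hI hφ l k
    have hev : deriv^[i] (Aseq l φ (k+1)) =ᶠ[nhds t]
        (fun s => s * deriv^[i+1] (Aseq l φ k) s
          + ((i : ℝ) - ((l : ℝ) + k)) * deriv^[i] (Aseq l φ k) s) := by
      filter_upwards [hI.mem_nhds ht] with s hs using ih s hs
    rw [Function.iterate_succ_apply', hev.deriv_eq]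
    have hv : HasDerivAt (deriv^[i+1] (Aseq l φ k)) (deriv^[i+2] (Aseq l φ k) t) t := by
      have := (diff_iter hI hsm (i+1) ht).hasDerivAt
      rwa [← Function.iterate_succ_apply' deriv (i+1)] at this
    have hw : HasDerivAt (deriv^[i] (Aseq l φ k)) (deriv^[i+1] (Aseq l φ k) t) t := by
      have := (diff_iter hI hsm i ht).hasDerivAt
      rwa [← Function.iterate_succ_apply' deriv i] at this
    have hd : HasDerivAt (fun s => s * deriv^[i+1] (Aseq l φ k) s
          + ((i : ℝ) - ((l : ℝ) + k)) * deriv^[i] (Aseq l φ k) s)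
        (1 * deriv^[i+1] (Aseq l φ k) t + t * deriv^[i+2] (Aseq l φ k) t
          + ((i : ℝ) - ((l : ℝ) + k)) * deriv^[i+1] (Aseq l φ k) t) t :=
      ((hasDerivAt_id t).mul hv).add (hw.const_mul _)
    rw [hd.deriv]
    push_cast
    ring

noncomputable def Nb (ε : ℝ) (l : ℕ) (M : ℕ → ℝ) : ℕ → ℕ → ℝ
  | 0, i => M i
  | (k+1), i => ε * Nb ε l M k (i+1) + ((i : ℝ) + l + k) * Nb ε l M k i

lemma Nb_pos {ε : ℝ} (hε : 0 < ε) {l : ℕ} (hl : 1 ≤ l) {M : ℕ → ℝ} (hM : ∀ n, 0 < M n) :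
    ∀ k i, 0 < Nb ε l M k i
  | 0, i => hM i
  | (k+1), i => by
    have h1 := Nb_pos hε hl hM k (i+1)
    have h2 := Nb_pos hε hl hM k i
    have : (0:ℝ) < (i : ℝ) + l + k := by
      have : (1:ℝ) ≤ (l:ℝ) := by exact_mod_cast hl
      positivity
    show 0 < ε * Nb ε l M k (i+1) + ((i : ℝ) + l + k) * Nb ε l M k i
    positivity

lemma Aseq_bound {φ : ℝ → ℝ} {I : Set ℝ} (hI : IsOpen I)
    (hφ : ContDiffOn ℝ (⊤ : ℕ∞) φ I) {ρ ε : ℝ} (hρε : ρ ≤ ε)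
    (hsub : Icc 0 ρ ⊆ I) (l : ℕ) {M : ℕ → ℝ}
    (hM : ∀ n, ∀ t ∈ Icc 0 ρ, |deriv^[n] φ t| ≤ M n) :
    ∀ k i, ∀ t ∈ Icc (0:ℝ) ρ, |deriv^[i] (Aseq l φ k) t| ≤ Nb ε l M k i := by
  intro k
  induction k with
  | zero => exact fun i t ht => hM i t ht
  | succ k ih =>
    intro i t ht
    rw [deriv_iter_Aseq hI hφ l k i t (hsub ht)]
    show |_| ≤ ε * Nb ε l M k (i+1) + ((i : ℝ) + l + k) * Nb ε l M k i
    refine (abs_add_le _ _).trans (add_le_add ?_ ?_)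
    · rw [abs_mul]
      refine mul_le_mul ?_ (ih (i+1) t ht) (abs_nonneg _) ?_
      · rw [abs_of_nonneg ht.1]; exact ht.2.trans hρε
      · linarith [abs_nonneg t, ht.1, ht.2, hρε]
    · rw [abs_mul]
      refine mul_le_mul ?_ (ih i t ht) (abs_nonneg _) ?_
      · rw [abs_sub_comm]
        refine (abs_sub _ _).trans ?_
        rw [abs_of_nonneg (by positivity : (0:ℝ) ≤ (l:ℝ)+k), abs_of_nonneg (by positivity : (0:ℝ) ≤ (i:ℝ))]
        linarith
      · positivity

lemma Aseq_vanish {φ : ℝ → ℝ} {I : Set ℝ} (hI : IsOpen I)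
    (hφ : ContDiffOn ℝ (⊤ : ℕ∞) φ I) (h0 : (0:ℝ) ∈ I) {l : ℕ}
    (hvan : ∀ j < l, deriv^[j] φ 0 = 0) :
    ∀ k, ∀ i < l + k, deriv^[i] (Aseq l φ k) 0 = 0 := by
  intro k
  induction k with
  | zero => exact fun i hi => hvan i (by omega)
  | succ k ih =>
    intro i hi
    rw [deriv_iter_Aseq hI hφ l k i 0 h0]
    rcases Nat.lt_or_ge i (l + k) with hik | hik
    · rw [ih i hik]
      simp
    · have : i = l + k := by omega
      subst this
      have hcoef : ((l + k : ℕ) : ℝ) - ((l : ℝ) + k) = 0 := by push_cast; ring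
      rw [hcoef]
      simp

lemma deriv_iter_quot {φ : ℝ → ℝ} {I : Set ℝ} (hI : IsOpen I)
    (hφ : ContDiffOn ℝ (⊤ : ℕ∞) φ I) {l : ℕ} (hl : 1 ≤ l) :
    ∀ k, ∀ t ∈ I, 0 < t →
      deriv^[k] (fun s => φ s / s ^ l) t = Aseq l φ k t / t ^ (l + k) := by
  intro k
  induction k with
  | zero => intro t _ _; simp [Aseq]
  | succ k ih =>
    intro t ht ht0
    have hIpos : IsOpen (I ∩ Ioi (0:ℝ)) := hI.inter isOpen_Ioi
    have hev : deriv^[k] (fun s => φ s / s ^ l) =ᶠ[nhds t]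
        (fun s => Aseq l φ k s / s ^ (l + k)) := by
      filter_upwards [hIpos.mem_nhds ⟨ht, ht0⟩] with s hs using ih s hs.1 hs.2
    rw [Function.iterate_succ_apply', hev.deriv_eq]
    obtain ⟨n, hn⟩ : ∃ n, l + k = n + 1 := ⟨l + k - 1, by omega⟩
    have hu : HasDerivAt (Aseq l φ k) (deriv (Aseq l φ k) t) t :=
      (diff_iter hI (Aseq_contDiffOn hI hφ l k) 0 ht).hasDerivAt
    have hp : HasDerivAt (fun s : ℝ => s ^ (l+k)) (((l+k : ℕ) : ℝ) * t ^ (l + k - 1)) t :=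
      hasDerivAt_pow (l+k) t
    have ht0' : t ^ (l + k) ≠ 0 := pow_ne_zero _ ht0.ne'
    have hd := hu.div hp ht0'
    rw [show (fun s => Aseq l φ k s / s ^ (l + k)) = (Aseq l φ k / fun s => s ^ (l + k)) from rfl, hd.deriv]
    show (deriv (Aseq l φ k) t * t ^ (l + k) - Aseq l φ k t * (((l+k : ℕ) : ℝ) * t ^ (l + k - 1)))
        / (t ^ (l + k)) ^ 2
      = (t * deriv (Aseq l φ k) t - ((l : ℝ) + k) * Aseq l φ k t) / t ^ (l + (k+1))
    rw [hn]
    have h1 : l + (k+1) = (n+1) + 1 := by omega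
    rw [h1]
    have hcast : ((n + 1 : ℕ) : ℝ) = (l : ℝ) + k := by
      rw [← hn]; push_cast; ring
    rw [Nat.add_sub_cancel, ← hcast]
    field_simp
    ring

theorem stmt1 (m : ℕ) (ε₀ : ℝ) (hε₀ : 0 < ε₀) (l : ℕ) (hl : 1 ≤ l)
    (h : ℝ × (Fin m → ℝ) → ℝ)
    (U : Set (ℝ × (Fin m → ℝ))) (hU : IsOpen U) (hKU : Kset m ε₀ ⊆ U)
    (hsmooth : ContDiffOn ℝ (⊤ : ℕ∞) h U)
    (hder : ∀ (k : ℕ) (αs : List (Fin m)), ∃ c > (0 : ℝ), ∀ p ∈ Kset m ε₀,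
      |(pr)^[k] (pz αs h) p| ≤ c)
    (f : ℝ × (Fin m → ℝ) → ℝ) (hf : ∀ p : ℝ × (Fin m → ℝ), 0 < p.1 → f p = h p / p.1 ^ l)
    (c : ℝ) (hc : 0 < c) (hbound : ∀ p ∈ Kset m ε₀, 0 < p.1 → |f p| ≤ c) :
    ∀ k : ℕ, ∃ ck > (0 : ℝ), ∀ p ∈ Kset m ε₀, 0 < p.1 →
      |(pr)^[k] f p| ≤ ck := by
  intro k
  choose M hMpos hMb using fun n => hder n []
  refine ⟨Nb ε₀ l M k (l+k) / (l+k).factorial, by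
    have := Nb_pos hε₀ hl hMpos k (l+k); positivity, ?_⟩
  rintro ⟨r, z⟩ hp hp1
  simp only at hp1
  set φ : ℝ → ℝ := fun t => h (t, z) with hφdef
  set I : Set ℝ := (fun t => (t, z)) ⁻¹' U with hIdef
  have hIopen : IsOpen I := hU.preimage (by fun_prop)
  have hφ : ContDiffOn ℝ (⊤ : ℕ∞) φ I :=
    hsmooth.comp ((contDiff_id.prodMk contDiff_const).contDiffOn) (fun t ht => ht)
  have hmem : ∀ t ∈ Icc (0:ℝ) r, (t, z) ∈ Kset m ε₀ := by
    intro t ht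
    refine ⟨ht.1, le_trans (Real.sqrt_le_sqrt ?_) hp.2⟩
    have : t ^ 2 ≤ r ^ 2 := by nlinarith [ht.1, ht.2]
    linarith
  have hsub : Icc (0:ℝ) r ⊆ I := fun t ht => hKU (hmem t ht)
  have hρε : r ≤ ε₀ := by
    have h1 : r = Real.sqrt (r ^ 2) := (Real.sqrt_sq hp.1).symm
    have h2 : Real.sqrt (r ^ 2) ≤ Real.sqrt (r ^ 2 + ∑ i, z i ^ 2) :=
      Real.sqrt_le_sqrt (le_add_of_nonneg_right (by positivity))
    exact h1 ▸ h2.trans hp.2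
  have hM' : ∀ n, ∀ t ∈ Icc (0:ℝ) r, |deriv^[n] φ t| ≤ M n := by
    intro n t ht
    have := hMb n (t, z) (hmem t ht)
    rwa [pr_iterate] at this
  have hφbd : ∀ t ∈ Ioc (0:ℝ) r, |φ t| ≤ c * t ^ l := by
    intro t ht
    have hb := hbound (t, z) (hmem t ⟨ht.1.le, ht.2⟩) ht.1
    have hfe : f (t, z) = h (t, z) / t ^ l := hf (t, z) ht.1
    have htl : (0:ℝ) < t ^ l := pow_pos ht.1 l
    have : φ t = f (t, z) * t ^ l := by
      rw [hfe, div_mul_cancel₀ _ htl.ne']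
    rw [this, abs_mul, abs_of_pos htl]
    exact mul_le_mul_of_nonneg_right hb htl.le
  have hvan := phi_vanish hIopen hφ hp1 hsub M hM' hc.le hφbd
  have hAvan := Aseq_vanish hIopen hφ (hsub (left_mem_Icc.2 hp1.le)) hvan k
  have hAb := Aseq_bound hIopen hφ hρε hsub l hM' k
  have Asmooth := Aseq_contDiffOn hIopen hφ l k
  obtain ⟨n, hn⟩ : ∃ n, l + k = n + 1 := ⟨l + k - 1, by omega⟩
  have tb : |Aseq l φ k r| ≤ Nb ε₀ l M k (l+k) * r ^ (l+k) / (l+k).factorial := by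
    rw [hn]
    exact taylor_bound hIopen Asmooth hsub n (fun i hi => hAvan i (by omega))
      (fun t ht => hn ▸ hAb (n+1) t ht) ⟨hp1, le_rfl⟩
  have e1 : (pr)^[k] f (r, z) = deriv^[k] (fun t => f (t, z)) r := pr_iterate k f r z
  have e2 : deriv^[k] (fun t => f (t, z)) r = deriv^[k] (fun s => φ s / s ^ l) r := by
    refine (iter_deriv_eventuallyEq_s1 ?_ k).eq_of_nhds
    filter_upwards [isOpen_Ioi.mem_nhds hp1] with s hs
    exact hf (s, z) hs
  have e3 : deriv^[k] (fun s => φ s / s ^ l) r = Aseq l φ k r / r ^ (l + k) :=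
    deriv_iter_quot hIopen hφ hl k r (hsub (right_mem_Icc.2 hp1.le)) hp1
  rw [e1, e2, e3, abs_div, abs_of_pos (by positivity : (0:ℝ) < r ^ (l+k))]
  rw [div_le_div_iff₀ (by positivity) (by positivity : (0:ℝ) < ((l+k).factorial : ℝ))]
  calc |Aseq l φ k r| * ((l+k).factorial : ℝ)
      ≤ (Nb ε₀ l M k (l+k) * r ^ (l+k) / (l+k).factorial) * ((l+k).factorial : ℝ) := by
        exact mul_le_mul_of_nonneg_right tb (by positivity)
    _ = Nb ε₀ l M k (l+k) * r ^ (l+k) := by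
        field_simp
end

section
/- Let m ∈ ℕ, ε̂ > 0, and let ω = (ω¹, ω²) : ℝ² × ℝ^m → ℝ² be smooth on an open neighborhood of the closed ball B̄ of radius ε̂ centered at the origin of ℝ^{2+m}, with ω(0,0,z) = 0 for every z with (0,0,z) ∈ B̄. Fix b ∈ ℝ, let A : ℝ² → ℝ² be the linear map with matrix (∂_{y_j}ω^i(0,0,0))_{i,j=1,2}, and write (a₁, a₂) = A(cos b, sin b). If a₁ ≠ 0, then there exist ε₀ ∈ (0, ε̂] and C > 0 such that for all r > 0 and z ∈ ℝ^m with (r² + |z|²)^{1/2} ≤ ε₀: ω¹(r·cos b, r·sin b, z) ≠ 0 and |arctan(ω²(r·cos b, r·sin b, z)/ω¹(r·cos b, r·sin b, z)) − arctan(a₂/a₁)| ≤ C·(|z| + r). -/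
set_option maxHeartbeats 1000000


/-- The closed ball of radius `ε` centered at the origin of `ℝ^{2+m}`
(Euclidean norm), with points written `(y₁, y₂, z)`. -/
def Bball (m : ℕ) (ε : ℝ) : Set (ℝ × ℝ × (Fin m → ℝ)) :=
  {p | Real.sqrt (p.1 ^ 2 + p.2.1 ^ 2 + ∑ i, p.2.2 i ^ 2) ≤ ε}

lemma key_est (m : ℕ) (εhat : ℝ) (hε : 0 < εhat)
    (ω : ℝ × ℝ × (Fin m → ℝ) → ℝ)
    (U : Set (ℝ × ℝ × (Fin m → ℝ))) (hU : IsOpen U) (hBU : Bball m εhat ⊆ U)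
    (hsmooth : ContDiffOn ℝ (⊤ : ℕ∞) ω U)
    (hvan : ∀ z : Fin m → ℝ, ((0:ℝ), (0:ℝ), z) ∈ Bball m εhat → ω (0, 0, z) = 0)
    (b : ℝ) :
    ∃ M : ℝ, 0 ≤ M ∧ ∀ (r : ℝ) (z : Fin m → ℝ), 0 < r →
      Real.sqrt (r ^ 2 + ∑ i, z i ^ 2) ≤ εhat / Real.sqrt (2 + m) / 2 →
      |ω (r * Real.cos b, r * Real.sin b, z) -
        r * (deriv (fun t => ω (t, 0, fun _ => 0)) 0 * Real.cos b +
             deriv (fun t => ω (0, t, fun _ => 0)) 0 * Real.sin b)| ≤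
        M * r * (r + Real.sqrt (∑ i, z i ^ 2)) := by
  set ρ := εhat / Real.sqrt (2 + m) with hρdef
  have hm1 : (1:ℝ) ≤ Real.sqrt (2 + m) := by
    rw [show (1:ℝ) = Real.sqrt 1 by simp]
    exact Real.sqrt_le_sqrt (by have := Nat.cast_nonneg (α := ℝ) m; linarith)
  have hρpos : 0 < ρ := div_pos hε (lt_of_lt_of_le one_pos hm1)
  have hρε : ρ ≤ εhat := by
    rw [hρdef, div_le_iff₀ (lt_of_lt_of_le one_pos hm1)]
    nlinarith
  set K := Metric.closedBall (0 : ℝ × ℝ × (Fin m → ℝ)) ρ with hKdef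
  have hKB : K ⊆ Bball m εhat := by
    intro p hp
    simp only [hKdef, Metric.mem_closedBall, dist_zero_right] at hp
    have h1 : |p.1| ≤ ρ := (norm_fst_le p).trans hp
    have h2 : |p.2.1| ≤ ρ := le_trans (le_trans (norm_fst_le p.2) (norm_snd_le p)) hp
    have h3 : ∀ i, |p.2.2 i| ≤ ρ := fun i =>
      le_trans (le_trans (norm_le_pi_norm p.2.2 i)
        (le_trans (norm_snd_le p.2) (norm_snd_le p))) hp
    show Real.sqrt _ ≤ εhat
    have hsum : p.1 ^ 2 + p.2.1 ^ 2 + ∑ i, p.2.2 i ^ 2 ≤ (2 + m) * ρ ^ 2 := by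
      have hs : ∑ i, p.2.2 i ^ 2 ≤ m * ρ ^ 2 := by
        calc ∑ i, p.2.2 i ^ 2 ≤ ∑ _i : Fin m, ρ ^ 2 :=
              Finset.sum_le_sum (fun i _ => by nlinarith [h3 i, abs_nonneg (p.2.2 i), sq_abs (p.2.2 i)])
          _ = m * ρ ^ 2 := by simp [Finset.sum_const, mul_comm]
      nlinarith [sq_abs p.1, sq_abs p.2.1, abs_nonneg p.1, abs_nonneg p.2.1]
    calc Real.sqrt (p.1 ^ 2 + p.2.1 ^ 2 + ∑ i, p.2.2 i ^ 2)
        ≤ Real.sqrt ((2 + m) * ρ ^ 2) := Real.sqrt_le_sqrt hsum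
      _ = Real.sqrt (2 + m) * ρ := by
          rw [Real.sqrt_mul (by positivity), Real.sqrt_sq hρpos.le]
      _ = εhat := by
          rw [hρdef]; field_simp
  have hKU : K ⊆ U := hKB.trans hBU
  have hdiff : ∀ x ∈ U, HasFDerivAt ω (fderiv ℝ ω x) x := fun x hx =>
    ((hsmooth.contDiffAt (hU.mem_nhds hx)).differentiableAt (by simp)).hasFDerivAt
  set g := fderiv ℝ ω with hgdef
  have hg : ContDiffOn ℝ (⊤ : ℕ∞) g U := hsmooth.fderiv_of_isOpen hU (by exact_mod_cast le_top)
  have hg' : ContDiffOn ℝ (⊤ : ℕ∞) (fderiv ℝ g) U := hg.fderiv_of_isOpen hU (by exact_mod_cast le_top)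
  obtain ⟨M₀, hM₀⟩ := (isCompact_closedBall (0:ℝ × ℝ × (Fin m → ℝ)) ρ).exists_bound_of_continuousOn (f := fderiv ℝ g)
    ((hg'.continuousOn).mono hKU)
  set M := max M₀ 0 with hMdef
  have hM0 : 0 ≤ M := le_max_right _ _
  have hM : ∀ x ∈ K, ‖fderiv ℝ g x‖ ≤ M := fun x hx => (hM₀ x hx).trans (le_max_left _ _)
  have h0K : (0:ℝ × ℝ × (Fin m → ℝ)) ∈ K := Metric.mem_closedBall_self hρpos.le
  have hglip : ∀ p ∈ K, ‖g p - g 0‖ ≤ M * ‖p‖ := by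
    intro p hp
    have := Convex.norm_image_sub_le_of_norm_fderiv_le (f := g) (s := K)
      (fun x hx => ((hg.contDiffAt (hU.mem_nhds (hKU hx))).differentiableAt (by simp)))
      hM (convex_closedBall _ _) h0K hp
    simpa using this
  refine ⟨M, hM0, ?_⟩
  intro r z hr hrz
  set nz := Real.sqrt (∑ i, z i ^ 2) with hnzdef
  have hnz0 : 0 ≤ nz := Real.sqrt_nonneg _
  have hzsum0 : 0 ≤ ∑ i, z i ^ 2 := Finset.sum_nonneg (fun i _ => sq_nonneg _)
  have hrle : r ≤ ρ / 2 := by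
    calc r = Real.sqrt (r ^ 2) := (Real.sqrt_sq hr.le).symm
      _ ≤ Real.sqrt (r ^ 2 + ∑ i, z i ^ 2) := Real.sqrt_le_sqrt (by linarith)
      _ ≤ ρ / 2 := hrz
  have hnzle : nz ≤ ρ / 2 := by
    calc nz ≤ Real.sqrt (r ^ 2 + ∑ i, z i ^ 2) := Real.sqrt_le_sqrt (by nlinarith)
      _ ≤ ρ / 2 := hrz
  set s := r + nz with hsdef
  have hs0 : 0 ≤ s := by positivity
  have hsρ : s ≤ ρ := by simp only [hsdef]; linarith
  have hzi : ∀ i, |z i| ≤ nz := fun i => by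
    rw [hnzdef, ← Real.sqrt_sq_eq_abs]
    exact Real.sqrt_le_sqrt (Finset.single_le_sum (f := fun i => z i ^ 2)
      (fun i _ => sq_nonneg _) (Finset.mem_univ i))
  set S := Metric.closedBall (0 : ℝ × ℝ × (Fin m → ℝ)) s with hSdef
  have hSK : S ⊆ K := Metric.closedBall_subset_closedBall hsρ
  have hmem : ∀ x : ℝ × ℝ × (Fin m → ℝ), |x.1| ≤ s → |x.2.1| ≤ s → x.2.2 = z → x ∈ S := by
    intro x h1 h2 h3
    simp only [hSdef, Metric.mem_closedBall, dist_zero_right]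
    rw [Prod.norm_def]
    refine max_le (by simpa using h1) ?_
    rw [Prod.norm_def]
    refine max_le (by simpa using h2) ?_
    rw [h3]
    exact (pi_norm_le_iff_of_nonneg hs0).2 fun i => by
      simpa using (hzi i).trans (by linarith)
  set p : ℝ × ℝ × (Fin m → ℝ) := (r * Real.cos b, r * Real.sin b, z) with hpdef
  set p₀ : ℝ × ℝ × (Fin m → ℝ) := (0, 0, z) with hp₀def
  have hrc : |r * Real.cos b| ≤ r := by
    rw [abs_mul, abs_of_pos hr]
    nlinarith [Real.abs_cos_le_one b, abs_nonneg (Real.cos b)]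
  have hrs : |r * Real.sin b| ≤ r := by
    rw [abs_mul, abs_of_pos hr]
    nlinarith [Real.abs_sin_le_one b, abs_nonneg (Real.sin b)]
  have hpS : p ∈ S := hmem p (hrc.trans (by linarith)) (hrs.trans (by linarith)) rfl
  have hp₀S : p₀ ∈ S := hmem p₀ (by simp [hp₀def, hs0]) (by simp [hp₀def, hs0]) rfl
  have hF : ∀ x ∈ S, HasFDerivAt (fun y => ω y - g 0 y) (g x - g 0) x := fun x hx =>
    (hdiff x (hKU (hSK hx))).sub ((g 0).hasFDerivAt)
  have key := Convex.norm_image_sub_le_of_norm_fderiv_le (f := fun y => ω y - g 0 y)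
    (s := S) (C := M * s)
    (fun x hx => (hF x hx).differentiableAt)
    (fun x hx => by
      rw [(hF x hx).fderiv]
      refine (hglip x (hSK hx)).trans ?_
      have hx' : ‖x‖ ≤ s := by simpa [hSdef] using hx
      exact mul_le_mul_of_nonneg_left hx' hM0)
    (convex_closedBall _ _) hp₀S hpS
  -- ω p₀ = 0
  have hp₀B : p₀ ∈ Bball m εhat := hKB (hSK hp₀S)
  have hω0 : ω p₀ = 0 := hvan z hp₀B
  -- the difference p - p₀
  set e₁ : ℝ × ℝ × (Fin m → ℝ) := (1, 0, 0) with he₁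
  set e₂ : ℝ × ℝ × (Fin m → ℝ) := (0, 1, 0) with he₂
  have hv : p - p₀ = (r * Real.cos b) • e₁ + (r * Real.sin b) • e₂ := by
    simp [hpdef, hp₀def, he₁, he₂, Prod.ext_iff]
  have hgv : g 0 p - g 0 p₀ = r * Real.cos b * g 0 e₁ + r * Real.sin b * g 0 e₂ := by
    rw [← map_sub, hv, map_add, map_smul, map_smul]; simp
  have hnv : ‖p - p₀‖ ≤ r := by
    rw [Prod.norm_def]
    refine max_le ?_ (max_le ?_ ?_)
    · simp only [hpdef, hp₀def, Prod.fst_sub, sub_zero, Real.norm_eq_abs]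
      exact hrc
    · simp only [hpdef, hp₀def, Prod.snd_sub, Prod.fst_sub, sub_zero, Real.norm_eq_abs]
      exact hrs
    · simp only [hpdef, hp₀def, Prod.snd_sub, sub_self]
      simpa using hr.le
  -- deriv identities
  have h0U : (0:ℝ × ℝ × (Fin m → ℝ)) ∈ U := hKU h0K
  have hD₁ : deriv (fun t => ω (t, 0, fun _ => 0)) 0 = g 0 e₁ := by
    have hc : HasDerivAt (fun t : ℝ => ((t, 0, fun _ => 0) : ℝ × ℝ × (Fin m → ℝ))) e₁ 0 :=
      (hasDerivAt_id 0).prodMk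
        ((hasDerivAt_const 0 (0:ℝ)).prodMk (hasDerivAt_const 0 (fun _ : Fin m => (0:ℝ))))
    exact ((hdiff 0 h0U).comp_hasDerivAt 0 hc).deriv
  have hD₂ : deriv (fun t => ω (0, t, fun _ => 0)) 0 = g 0 e₂ := by
    have hc : HasDerivAt (fun t : ℝ => ((0, t, fun _ => 0) : ℝ × ℝ × (Fin m → ℝ))) e₂ 0 :=
      (hasDerivAt_const 0 (0:ℝ)).prodMk
        ((hasDerivAt_id 0).prodMk (hasDerivAt_const 0 (fun _ : Fin m => (0:ℝ))))
    exact ((hdiff 0 h0U).comp_hasDerivAt 0 hc).deriv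
  rw [hD₁, hD₂]
  have hkey2 : |ω p - (g 0 p - g 0 p₀)| ≤ M * s * r := by
    have : ‖(ω p - g 0 p) - (ω p₀ - g 0 p₀)‖ ≤ M * s * ‖p - p₀‖ := key
    rw [hω0] at this
    calc |ω p - (g 0 p - g 0 p₀)| = ‖(ω p - g 0 p) - (0 - g 0 p₀)‖ := by
          rw [Real.norm_eq_abs]; ring_nf
      _ ≤ M * s * ‖p - p₀‖ := this
      _ ≤ M * s * r := mul_le_mul_of_nonneg_left hnv (by positivity)
  calc |ω p - r * (g 0 e₁ * Real.cos b + g 0 e₂ * Real.sin b)|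
      = |ω p - (g 0 p - g 0 p₀)| := by rw [hgv]; ring_nf
    _ ≤ M * s * r := hkey2
    _ = M * r * (r + nz) := by rw [hsdef]; ring
lemma arctan_lip (x y : ℝ) : |Real.arctan y - Real.arctan x| ≤ |y - x| := by
  have h := Convex.norm_image_sub_le_of_norm_deriv_le (f := Real.arctan) (s := Set.univ)
    (C := 1) (fun t _ => Real.differentiable_arctan t)
    (fun t _ => by
      rw [Real.deriv_arctan, Real.norm_eq_abs, abs_of_nonneg (by positivity)]
      rw [div_le_one (by positivity)]; nlinarith [sq_nonneg t])
    convex_univ (Set.mem_univ x) (Set.mem_univ y)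
  simpa using h

theorem stmt6 (m : ℕ) (εhat : ℝ) (hε : 0 < εhat)
    (ω₁ ω₂ : ℝ × ℝ × (Fin m → ℝ) → ℝ)
    (U : Set (ℝ × ℝ × (Fin m → ℝ))) (hU : IsOpen U) (hBU : Bball m εhat ⊆ U)
    (hsmooth₁ : ContDiffOn ℝ (⊤ : ℕ∞) ω₁ U) (hsmooth₂ : ContDiffOn ℝ (⊤ : ℕ∞) ω₂ U)
    (hvanish : ∀ z : Fin m → ℝ, ((0 : ℝ), (0 : ℝ), z) ∈ Bball m εhat →
      ω₁ (0, 0, z) = 0 ∧ ω₂ (0, 0, z) = 0)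
    (b : ℝ) (a₁ a₂ : ℝ)
    -- `(a₁, a₂) = A (cos b, sin b)` where `A` is the Jacobian matrix of `ω` in `y` at the origin
    (ha₁ : a₁ = deriv (fun t => ω₁ (t, 0, fun _ => 0)) 0 * Real.cos b +
        deriv (fun t => ω₁ (0, t, fun _ => 0)) 0 * Real.sin b)
    (ha₂ : a₂ = deriv (fun t => ω₂ (t, 0, fun _ => 0)) 0 * Real.cos b +
        deriv (fun t => ω₂ (0, t, fun _ => 0)) 0 * Real.sin b)
    (ha₁ne : a₁ ≠ 0) :
    ∃ ε₀ : ℝ, 0 < ε₀ ∧ ε₀ ≤ εhat ∧ ∃ C > (0 : ℝ),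
      ∀ (r : ℝ) (z : Fin m → ℝ), 0 < r →
        Real.sqrt (r ^ 2 + ∑ i, z i ^ 2) ≤ ε₀ →
        ω₁ (r * Real.cos b, r * Real.sin b, z) ≠ 0 ∧
        |Real.arctan (ω₂ (r * Real.cos b, r * Real.sin b, z) /
              ω₁ (r * Real.cos b, r * Real.sin b, z)) - Real.arctan (a₂ / a₁)| ≤
          C * (Real.sqrt (∑ i, z i ^ 2) + r) := by
  obtain ⟨M₁, hM₁0, hM₁⟩ := key_est m εhat hε ω₁ U hU hBU hsmooth₁
    (fun z hz => (hvanish z hz).1) b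
  obtain ⟨M₂, hM₂0, hM₂⟩ := key_est m εhat hε ω₂ U hU hBU hsmooth₂
    (fun z hz => (hvanish z hz).2) b
  set M := max M₁ M₂ with hMdef
  have hM0 : 0 ≤ M := le_trans hM₁0 (le_max_left _ _)
  have hm1 : (1:ℝ) ≤ Real.sqrt (2 + m) := by
    rw [show (1:ℝ) = Real.sqrt 1 by simp]
    exact Real.sqrt_le_sqrt (by have := Nat.cast_nonneg (α := ℝ) m; linarith)
  have hmpos : (0:ℝ) < Real.sqrt (2 + m) := lt_of_lt_of_le one_pos hm1
  set ρ2 := εhat / Real.sqrt (2 + m) / 2 with hρ2def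
  have hρ2pos : 0 < ρ2 := by positivity
  have hρ2ε : ρ2 ≤ εhat := by
    have h1 : εhat / Real.sqrt (2 + m) ≤ εhat := by
      rw [div_le_iff₀ hmpos]; nlinarith
    have h2 : 0 ≤ εhat / Real.sqrt (2 + m) := by positivity
    rw [hρ2def]; linarith
  set ε₀ := min ρ2 (|a₁| / (4 * (M + 1))) with hε₀def
  have hε₀pos : 0 < ε₀ := lt_min hρ2pos (by positivity)
  refine ⟨ε₀, hε₀pos, (min_le_left _ _).trans hρ2ε, ?_⟩
  set A := |a₁| + |a₂| with hAdef
  have hA0 : 0 ≤ A := by positivity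
  set C := 2 * A * (M + 1) / a₁ ^ 2 + 1 with hCdef
  have hCpos : 0 < C := by positivity
  refine ⟨C, hCpos, ?_⟩
  intro r z hr hrz
  set nz := Real.sqrt (∑ i, z i ^ 2) with hnzdef
  have hnz0 : 0 ≤ nz := Real.sqrt_nonneg _
  have hzsum0 : 0 ≤ ∑ i, z i ^ 2 := Finset.sum_nonneg (fun i _ => sq_nonneg _)
  have hrz' : Real.sqrt (r ^ 2 + ∑ i, z i ^ 2) ≤ ρ2 := hrz.trans (min_le_left _ _)
  have hB₁ := hM₁ r z hr hrz'
  have hB₂ := hM₂ r z hr hrz'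
  rw [← ha₁] at hB₁
  rw [← ha₂] at hB₂
  set p := ((r * Real.cos b, r * Real.sin b, z) : ℝ × ℝ × (Fin m → ℝ)) with hpdef
  set s := r + nz with hsdef
  have hs0 : 0 ≤ s := by positivity
  have hrε : r ≤ ε₀ := by
    calc r = Real.sqrt (r ^ 2) := (Real.sqrt_sq hr.le).symm
      _ ≤ Real.sqrt (r ^ 2 + ∑ i, z i ^ 2) := Real.sqrt_le_sqrt (by linarith)
      _ ≤ ε₀ := hrz
  have hnzε : nz ≤ ε₀ := by
    calc nz ≤ Real.sqrt (r ^ 2 + ∑ i, z i ^ 2) := Real.sqrt_le_sqrt (by nlinarith)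
      _ ≤ ε₀ := hrz
  have hε₀a : ε₀ ≤ |a₁| / (4 * (M + 1)) := min_le_right _ _
  have hMs : (M + 1) * s ≤ |a₁| / 2 := by
    have h1 : s ≤ 2 * (|a₁| / (4 * (M + 1))) := by
      rw [hsdef]; linarith [hrε.trans hε₀a, hnzε.trans hε₀a]
    have h2 : (M + 1) * s ≤ (M + 1) * (2 * (|a₁| / (4 * (M + 1)))) :=
      mul_le_mul_of_nonneg_left h1 (by linarith)
    have h3 : (M + 1) * (2 * (|a₁| / (4 * (M + 1)))) = |a₁| / 2 := by
      field_simp; ring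
    linarith
  have hB₁' : |ω₁ p - r * a₁| ≤ M * r * s := by
    refine hB₁.trans ?_
    have h : M₁ ≤ M := le_max_left _ _
    exact mul_le_mul_of_nonneg_right (mul_le_mul_of_nonneg_right h hr.le) hs0
  have hB₂' : |ω₂ p - r * a₂| ≤ M * r * s := by
    refine hB₂.trans ?_
    have h : M₂ ≤ M := le_max_right _ _
    exact mul_le_mul_of_nonneg_right (mul_le_mul_of_nonneg_right h hr.le) hs0
  clear_value M nz s p A C ε₀ ρ2
  have ha₁pos : 0 < |a₁| := abs_pos.2 ha₁ne
  have hlow : |a₁| * r / 2 ≤ |ω₁ p| := by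
    have htri : |r * a₁| ≤ |ω₁ p| + |ω₁ p - r * a₁| := by
      have h := abs_sub (ω₁ p) (ω₁ p - r * a₁)
      have he : ω₁ p - (ω₁ p - r * a₁) = r * a₁ := by ring
      rwa [he] at h
    rw [abs_mul, abs_of_pos hr] at htri
    have hMs' : M * r * s ≤ |a₁| / 2 * r := by
      have h : M * s ≤ |a₁| / 2 := by linarith [hMs, hs0]
      calc M * r * s = M * s * r := by ring
        _ ≤ |a₁| / 2 * r := mul_le_mul_of_nonneg_right h hr.le
    linarith [hB₁']
  have hne : ω₁ p ≠ 0 := by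
    intro h
    rw [h, abs_zero] at hlow
    nlinarith
  refine ⟨hne, ?_⟩
  have harc := arctan_lip (a₂ / a₁) (ω₂ p / ω₁ p)
  refine harc.trans ?_
  rw [div_sub_div _ _ hne ha₁ne, abs_div]
  have hnum : |ω₂ p * a₁ - ω₁ p * a₂| ≤ M * r * s * A := by
    have h1 : ω₂ p * a₁ - ω₁ p * a₂ = (ω₂ p - r * a₂) * a₁ - (ω₁ p - r * a₁) * a₂ := by ring
    rw [h1]
    calc |(ω₂ p - r * a₂) * a₁ - (ω₁ p - r * a₁) * a₂|
        ≤ |(ω₂ p - r * a₂) * a₁| + |(ω₁ p - r * a₁) * a₂| := abs_sub _ _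
      _ = |ω₂ p - r * a₂| * |a₁| + |ω₁ p - r * a₁| * |a₂| := by rw [abs_mul, abs_mul]
      _ ≤ M * r * s * |a₁| + M * r * s * |a₂| :=
          add_le_add (mul_le_mul_of_nonneg_right hB₂' (abs_nonneg _))
            (mul_le_mul_of_nonneg_right hB₁' (abs_nonneg _))
      _ = M * r * s * A := by rw [hAdef]; ring
  have hden : a₁ ^ 2 * r / 2 ≤ |ω₁ p * a₁| := by
    rw [abs_mul]
    have h2 : |a₁| ^ 2 = a₁ ^ 2 := sq_abs a₁
    nlinarith
  have hdenpos : (0:ℝ) < a₁ ^ 2 * r / 2 := by positivity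
  have hfrac : |ω₂ p * a₁ - ω₁ p * a₂| / |ω₁ p * a₁| ≤ (M * r * s * A) / (a₁ ^ 2 * r / 2) :=
    div_le_div₀ (by positivity) hnum hdenpos hden
  refine hfrac.trans ?_
  have hCa : C * a₁ ^ 2 = 2 * A * (M + 1) + a₁ ^ 2 := by
    rw [hCdef]; field_simp
  rw [div_le_iff₀ hdenpos]
  have hgoal : C * (nz + r) * (a₁ ^ 2 * r / 2) = (nz + r) * r * (C * a₁ ^ 2) / 2 := by ring
  rw [hgoal, hCa]
  have hsnr : s = nz + r := by rw [hsdef]; ring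
  rw [← hsnr]
  have he : s * r * (2 * A * (M + 1) + a₁ ^ 2) / 2 =
      M * r * s * A + s * r * A + s * r * a₁ ^ 2 / 2 := by ring
  rw [he]
  have h1 : 0 ≤ s * r * A := mul_nonneg (mul_nonneg hs0 hr.le) hA0
  have h2 : 0 ≤ s * r * a₁ ^ 2 := mul_nonneg (mul_nonneg hs0 hr.le) (sq_nonneg a₁)
  linarith
end

section
/- Let m ∈ ℕ, b ∈ ℝ. Then there exists C > 0, depending only on b, such that the following holds. Let ε₀ ∈ (0, 1/2], and let Φ', R' : (0,∞) × ℝ^m → ℝ be continuous functions with |Φ'(r,z)| ≤ ε₀ and |R'(r,z)| ≤ ε₀·r for all r > 0 and z ∈ ℝ^m. Then for every continuously differentiable function W : ℝ × (0,∞) × ℝ^m → ℝ with compact support, ∫_{ℝ^m} ∫_0^∞ ∫_ℝ r^{2b} |W(φ, r, z) − W(φ + Φ'(r,z), r + R'(r,z), z)|² · r dφ dr dz ≤ C·ε₀² · [ ∫_{ℝ^m} ∫_0^∞ ∫_ℝ r^{2b} |W(φ,r,z)|² · r dφ dr dz + ∫_{ℝ^m} ∫_0^∞ ∫_ℝ r^{2(b+1)}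 ( |r^{-1} ∂_φ W(φ,r,z)|² + |∂_r W(φ,r,z)|² + |∇_z W(φ,r,z)|² ) · r dφ dr dz ]. -/
open MeasureTheory

/-- Partial derivative in the angular variable `φ` of a function `W(φ, r, z)`. -/
noncomputable def dphi {m : ℕ} (W : ℝ × ℝ × (Fin m → ℝ) → ℝ) :
    ℝ × ℝ × (Fin m → ℝ) → ℝ :=
  fun p => deriv (fun t => W (t, p.2.1, p.2.2)) p.1

/-- Partial derivative in the radial variable `r` of a function `W(φ, r, z)`. -/
noncomputable def dr {m : ℕ} (W : ℝ × ℝ × (Fin m → ℝ) → ℝ) :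
    ℝ × ℝ × (Fin m → ℝ) → ℝ :=
  fun p => deriv (fun t => W (p.1, t, p.2.2)) p.2.1

/-- Partial derivative in the variable `z ξ` of a function `W(φ, r, z)`. -/
noncomputable def dz {m : ℕ} (ξ : Fin m) (W : ℝ × ℝ × (Fin m → ℝ) → ℝ) :
    ℝ × ℝ × (Fin m → ℝ) → ℝ :=
  fun p => deriv (fun t => W (p.1, p.2.1, Function.update p.2.2 ξ t)) (p.2.2 ξ)

/-! ### Auxiliary lemmas -/

/-- A measurable bounded function with support in a finite-measure set is integrable. -/
lemma integrable_of_bdd_supp {α : Type*} [MeasurableSpace α] {μ : Measure α}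
    {f : α → ℝ} (hm : AEStronglyMeasurable f μ) {K : Set α} (hK : MeasurableSet K)
    (hKfin : μ K < ⊤) {M : ℝ} (hb : ∀ x, |f x| ≤ M) (hsupp : ∀ x ∉ K, f x = 0) :
    Integrable f μ := by
  refine Integrable.mono' (g := K.indicator fun _ => M)
    ((integrable_indicator_iff hK).2 (integrableOn_const hKfin.ne)) hm ?_
  refine Filter.Eventually.of_forall fun x => ?_
  by_cases hx : x ∈ K
  · simpa [Set.indicator_of_mem hx] using hb x
  · simp [Set.indicator_of_notMem hx, hsupp x hx]

lemma integrable_prod_of_bdd_supp {f : ℝ × ℝ → ℝ} {μ ν : Measure ℝ} [SFinite μ] [SFinite ν]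
    (hm : Measurable f) {K1 K2 : Set ℝ} (h1 : MeasurableSet K1)
    (h2 : MeasurableSet K2) (hf1 : μ K1 < ⊤) (hf2 : ν K2 < ⊤) {M : ℝ}
    (hb : ∀ q, |f q| ≤ M) (hsupp : ∀ q ∉ K1 ×ˢ K2, f q = 0) :
    Integrable f (μ.prod ν) :=
  integrable_of_bdd_supp hm.aestronglyMeasurable (h1.prod h2)
    (by rw [Measure.prod_prod]; exact ENNReal.mul_lt_top hf1 hf2) hb hsupp

/-- `|∫ h| ≤ M * (d - c)` for `h` bounded by `M` and vanishing outside `[c, d]`. -/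
lemma abs_setIntegral_le_of_bdd_supp {h : ℝ → ℝ} {c d M : ℝ} (hcd : c ≤ d) (hM : 0 ≤ M)
    {s : Set ℝ} (hs : ∀ u, u ∉ Set.Icc c d → h u = 0) (hb : ∀ u, |h u| ≤ M) :
    |∫ u in s, h u| ≤ M * (d - c) := by
  rw [← setIntegral_eq_integral_of_forall_compl_eq_zero (μ := volume.restrict s) hs]
  have hle2 : (volume.restrict s) (Set.Icc c d) ≤ volume (Set.Icc c d) := by
    rw [Measure.restrict_apply measurableSet_Icc]
    exact measure_mono Set.inter_subset_left
  have hfin : (volume.restrict s) (Set.Icc c d) < ⊤ :=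
    lt_of_le_of_lt hle2 (by rw [Real.volume_Icc]; exact ENNReal.ofReal_lt_top)
  have hle := norm_setIntegral_le_of_norm_le_const (μ := volume.restrict s) (f := h) hfin
    (fun x _ => by simpa [Real.norm_eq_abs] using hb x)
  rw [Real.norm_eq_abs] at hle
  refine hle.trans ?_
  have h2 : ((volume.restrict s) (Set.Icc c d)).toReal ≤ d - c := by
    refine le_trans (ENNReal.toReal_mono (by simp [Real.volume_Icc]) hle2) ?_
    rw [Real.volume_Icc, ENNReal.toReal_ofReal (by linarith)]
  exact mul_le_mul_of_nonneg_left h2 hM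

lemma abs_integral_le_of_bdd_supp {h : ℝ → ℝ} {c d M : ℝ} (hcd : c ≤ d) (hM : 0 ≤ M)
    (hs : ∀ u, u ∉ Set.Icc c d → h u = 0) (hb : ∀ u, |h u| ≤ M) :
    |∫ u, h u| ≤ M * (d - c) := by
  rw [show (volume : Measure ℝ) = volume.restrict Set.univ by rw [Measure.restrict_univ]]
  exact abs_setIntegral_le_of_bdd_supp hcd hM hs hb

lemma rpow_le_add_of_mem {a R r c : ℝ} (ha : 0 < a) (h1 : a ≤ r) (h2 : r ≤ R) :
    r ^ c ≤ a ^ c + R ^ c := by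
  rcases le_or_gt 0 c with hc | hc
  · exact le_add_of_nonneg_of_le (Real.rpow_nonneg ha.le c)
      (Real.rpow_le_rpow (by linarith) h2 hc)
  · exact le_add_of_le_of_nonneg (Real.rpow_le_rpow_of_nonpos ha h1 hc.le)
      (Real.rpow_nonneg (by linarith) c)

lemma integral_eq_zero_of_eq_zero {α : Type*} [MeasurableSpace α] {μ : Measure α} {f : α → ℝ}
    (h : ∀ x, f x = 0) : ∫ x, f x ∂μ = 0 := by
  rw [funext h]; simp

/-- Cauchy-Schwarz on an interval. -/
lemma sq_setIntegral_le {f : ℝ → ℝ} (hf : Continuous f) {a c : ℝ} (hac : a ≤ c) :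
    (∫ u in Set.Ioc a c, f u) ^ 2 ≤ (c - a) * ∫ u in Set.Ioc a c, (f u) ^ 2 := by
  rcases eq_or_lt_of_le hac with h | h
  · simp [← h]
  set L := c - a with hL
  have hL0 : (0:ℝ) < L := by simp only [hL]; linarith
  have hif : IntegrableOn f (Set.Ioc a c) := hf.integrableOn_Ioc
  have hif2 : IntegrableOn (fun u => (f u)^2) (Set.Ioc a c) := (hf.pow 2).integrableOn_Ioc
  set I := ∫ u in Set.Ioc a c, f u with hI
  set J := ∫ u in Set.Ioc a c, (f u)^2 with hJ
  have h0 : 0 ≤ ∫ u in Set.Ioc a c, (L * f u - I)^2 :=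
    setIntegral_nonneg measurableSet_Ioc (fun x _ => sq_nonneg _)
  have hvol : (volume (Set.Ioc a c)).toReal = L := by
    rw [Real.volume_Ioc, ENNReal.toReal_ofReal hL0.le]
  have hexp : ∫ u in Set.Ioc a c, (L * f u - I)^2
      = L^2 * J - (2*L*I) * I + I^2 * L := by
    have h1 : IntegrableOn (fun u => L^2 * (f u)^2 - (2*L*I) * (f u)) (Set.Ioc a c) :=
      (hif2.const_mul _).sub (hif.const_mul _)
    have hconst : IntegrableOn (fun _ : ℝ => I^2) (Set.Ioc a c) :=
      integrableOn_const (by rw [Real.volume_Ioc]; exact ENNReal.ofReal_ne_top)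
    calc ∫ u in Set.Ioc a c, (L * f u - I)^2
        = ∫ u in Set.Ioc a c, ((L^2 * (f u)^2 - (2*L*I) * (f u)) + I^2) := by
          congr 1; funext u; ring
      _ = (∫ u in Set.Ioc a c, (L^2 * (f u)^2 - (2*L*I) * (f u)))
            + ∫ _ in Set.Ioc a c, (I^2 : ℝ) := integral_add h1 hconst
      _ = (L^2 * J - (2*L*I) * I) + I^2 * L := by
          rw [integral_sub (hif2.const_mul _) (hif.const_mul _), integral_const_mul,
            integral_const_mul, setIntegral_const, measureReal_def, hvol]
          simp [smul_eq_mul]; ring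
      _ = L^2 * J - (2*L*I) * I + I^2 * L := by ring
  rw [hexp] at h0
  nlinarith [h0, hL0]

lemma sq_intervalIntegral_le {f : ℝ → ℝ} (hf : Continuous f) (a c : ℝ) :
    (∫ u in a..c, f u) ^ 2 ≤ |c - a| * ∫ u in Set.uIoc a c, (f u) ^ 2 := by
  rcases le_total a c with h | h
  · rw [intervalIntegral.integral_of_le h, Set.uIoc_of_le h, abs_of_nonneg (by linarith)]
    exact sq_setIntegral_le hf h
  · rw [intervalIntegral.integral_symm, Set.uIoc_of_ge h, abs_of_nonpos (by linarith), neg_sq,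
      intervalIntegral.integral_of_le h]
    rw [show -(c - a) = a - c by ring]
    exact sq_setIntegral_le hf h

section derivs
variable {m : ℕ} {W : ℝ × ℝ × (Fin m → ℝ) → ℝ}

lemma hasDerivAt_slice_phi (hW : ContDiff ℝ 1 W) (φ r : ℝ) (z : Fin m → ℝ) :
    HasDerivAt (fun t => W (t, r, z)) (dphi W (φ, r, z)) φ := by
  have h : DifferentiableAt ℝ (fun t : ℝ => W (t, r, z)) φ :=
    (hW.differentiable one_ne_zero (φ, r, z)).comp φ
      (differentiableAt_id.prodMk (differentiableAt_const (r, z)))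
  exact h.hasDerivAt

lemma hasDerivAt_slice_r (hW : ContDiff ℝ 1 W) (φ r : ℝ) (z : Fin m → ℝ) :
    HasDerivAt (fun t => W (φ, t, z)) (dr W (φ, r, z)) r := by
  have h : DifferentiableAt ℝ (fun t : ℝ => W (φ, t, z)) r := by
    have h2 : DifferentiableAt ℝ (fun t : ℝ => (φ, t, z)) r :=
      (differentiableAt_const φ).prodMk (differentiableAt_id.prodMk (differentiableAt_const z))
    exact (hW.differentiable one_ne_zero (φ, r, z)).comp r h2
  exact h.hasDerivAt

lemma dphi_eq_fderiv (hW : ContDiff ℝ 1 W) (p : ℝ × ℝ × (Fin m → ℝ)) :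
    dphi W p = fderiv ℝ W p ((1:ℝ), (0:ℝ), (0 : Fin m → ℝ)) := by
  have hc : HasDerivAt (fun t : ℝ => (t, p.2.1, p.2.2)) ((1:ℝ), (0:ℝ), (0 : Fin m → ℝ)) p.1 :=
    (hasDerivAt_id p.1).prodMk (hasDerivAt_const _ _)
  have h := ((hW.differentiable one_ne_zero p).hasFDerivAt).comp_hasDerivAt p.1 hc
  exact h.deriv

lemma dr_eq_fderiv (hW : ContDiff ℝ 1 W) (p : ℝ × ℝ × (Fin m → ℝ)) :
    dr W p = fderiv ℝ W p ((0:ℝ), (1:ℝ), (0 : Fin m → ℝ)) := by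
  have hc : HasDerivAt (fun t : ℝ => (p.1, t, p.2.2)) ((0:ℝ), (1:ℝ), (0 : Fin m → ℝ)) p.2.1 :=
    (hasDerivAt_const _ _).prodMk ((hasDerivAt_id _).prodMk (hasDerivAt_const _ _))
  have h := ((hW.differentiable one_ne_zero p).hasFDerivAt).comp_hasDerivAt p.2.1 hc
  exact h.deriv

lemma dz_eq_fderiv (hW : ContDiff ℝ 1 W) (ξ : Fin m) (p : ℝ × ℝ × (Fin m → ℝ)) :
    dz ξ W p = fderiv ℝ W p ((0:ℝ), (0:ℝ), Pi.single ξ (1:ℝ)) := by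
  have hc : HasDerivAt (fun t : ℝ => (p.1, p.2.1, Function.update p.2.2 ξ t))
      ((0:ℝ), (0:ℝ), Pi.single ξ (1:ℝ)) (p.2.2 ξ) :=
    (hasDerivAt_const _ _).prodMk ((hasDerivAt_const _ _).prodMk (hasDerivAt_update p.2.2 ξ (p.2.2 ξ)))
  have hF : HasFDerivAt W (fderiv ℝ W p)
      ((fun t : ℝ => (p.1, p.2.1, Function.update p.2.2 ξ t)) (p.2.2 ξ)) := by
    simp only [Function.update_eq_self]
    exact (hW.differentiable one_ne_zero p).hasFDerivAt
  have h := hF.comp_hasDerivAt (p.2.2 ξ) hc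
  exact h.deriv

lemma continuous_dphi (hW : ContDiff ℝ 1 W) : Continuous (dphi W) := by
  rw [funext (dphi_eq_fderiv hW)]
  exact (hW.continuous_fderiv one_ne_zero).clm_apply continuous_const

lemma continuous_dr (hW : ContDiff ℝ 1 W) : Continuous (dr W) := by
  rw [funext (dr_eq_fderiv hW)]
  exact (hW.continuous_fderiv one_ne_zero).clm_apply continuous_const

lemma continuous_dz (hW : ContDiff ℝ 1 W) (ξ : Fin m) : Continuous (dz ξ W) := by
  rw [funext (dz_eq_fderiv hW ξ)]
  exact (hW.continuous_fderiv one_ne_zero).clm_apply continuous_const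

lemma dphi_zero {p : ℝ × ℝ × (Fin m → ℝ)} (hp : p ∉ tsupport W) : dphi W p = 0 := by
  have h : W =ᶠ[nhds p] 0 := notMem_tsupport_iff_eventuallyEq.1 hp
  have hcont : Filter.Tendsto (fun t : ℝ => (t, p.2.1, p.2.2)) (nhds p.1) (nhds p) :=
    Continuous.tendsto (by fun_prop) p.1
  have h2 : (fun t : ℝ => W (t, p.2.1, p.2.2)) =ᶠ[nhds p.1] (fun _ => (0:ℝ)) :=
    h.comp_tendsto hcont
  show deriv _ _ = 0
  rw [h2.deriv_eq]; simp

lemma dr_zero {p : ℝ × ℝ × (Fin m → ℝ)} (hp : p ∉ tsupport W) : dr W p = 0 := by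
  have h : W =ᶠ[nhds p] 0 := notMem_tsupport_iff_eventuallyEq.1 hp
  have hcont : Filter.Tendsto (fun t : ℝ => (p.1, t, p.2.2)) (nhds p.2.1) (nhds p) :=
    Continuous.tendsto (by fun_prop) p.2.1
  have h2 : (fun t : ℝ => W (p.1, t, p.2.2)) =ᶠ[nhds p.2.1] (fun _ => (0:ℝ)) :=
    h.comp_tendsto hcont
  show deriv _ _ = 0
  rw [h2.deriv_eq]; simp

lemma dz_zero {ξ : Fin m} {p : ℝ × ℝ × (Fin m → ℝ)} (hp : p ∉ tsupport W) : dz ξ W p = 0 := by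
  have h : W =ᶠ[nhds p] 0 := notMem_tsupport_iff_eventuallyEq.1 hp
  have hcont : Filter.Tendsto (fun t : ℝ => (p.1, p.2.1, Function.update p.2.2 ξ t))
      (nhds (p.2.2 ξ)) (nhds p) := by
    have h3 := Continuous.tendsto (f := fun t : ℝ => (p.1, p.2.1, Function.update p.2.2 ξ t))
      (by fun_prop) (p.2.2 ξ)
    simpa [Function.update_eq_self] using h3
  have h2 : (fun t : ℝ => W (p.1, p.2.1, Function.update p.2.2 ξ t))
      =ᶠ[nhds (p.2.2 ξ)] (fun _ => (0:ℝ)) := h.comp_tendsto hcont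
  show deriv _ _ = 0
  rw [h2.deriv_eq]; simp

end derivs

set_option maxHeartbeats 2000000 in
theorem stmt9 (m : ℕ) (b : ℝ) :
    ∃ C > (0 : ℝ), ∀ ε₀ : ℝ, 0 < ε₀ → ε₀ ≤ 1 / 2 →
      ∀ Φ' R' : ℝ × (Fin m → ℝ) → ℝ,
        ContinuousOn Φ' {p | 0 < p.1} → ContinuousOn R' {p | 0 < p.1} →
        (∀ r : ℝ, 0 < r → ∀ z : Fin m → ℝ, |Φ' (r, z)| ≤ ε₀) →
        (∀ r : ℝ, 0 < r → ∀ z : Fin m → ℝ, |R' (r, z)| ≤ ε₀ * r) →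
        ∀ W : ℝ × ℝ × (Fin m → ℝ) → ℝ,
          ContDiff ℝ 1 W → HasCompactSupport W →
          tsupport W ⊆ {p : ℝ × ℝ × (Fin m → ℝ) | 0 < p.2.1} →
          (∫ z : Fin m → ℝ, ∫ r in Set.Ioi (0 : ℝ), ∫ φ : ℝ,
              r ^ (2 * b) *
                |W (φ, r, z) - W (φ + Φ' (r, z), r + R' (r, z), z)| ^ 2 * r) ≤
          C * ε₀ ^ 2 *
            ((∫ z : Fin m → ℝ, ∫ r in Set.Ioi (0 : ℝ), ∫ φ : ℝ,
                r ^ (2 * b) * |W (φ, r, z)| ^ 2 * r) +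
             (∫ z : Fin m → ℝ, ∫ r in Set.Ioi (0 : ℝ), ∫ φ : ℝ,
                r ^ (2 * (b + 1)) *
                  (|dphi W (φ, r, z) / r| ^ 2 + |dr W (φ, r, z)| ^ 2 +
                    ∑ ξ, |dz ξ W (φ, r, z)| ^ 2) * r)) := by
  classical
  set Kb : ℝ := ((2:ℝ) ^ (2*b) + (1/2:ℝ) ^ (2*b)) * 4 with hKbdef
  have hKbpos : 0 < Kb := by
    rw [hKbdef]
    have h1 := Real.rpow_pos_of_pos (by norm_num : (0:ℝ) < 2) (2*b)
    have h2 := Real.rpow_pos_of_pos (by norm_num : (0:ℝ) < 1/2) (2*b)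
    nlinarith
  refine ⟨4 + 6 * Kb, by linarith, ?_⟩
  intro ε₀ hε hεh Φ' R' _ _ hΦb hRb W hW hWc hWsupp
  have hKc : IsCompact (tsupport W) := hWc
  obtain ⟨RR, hRRpos, hKball⟩ := hKc.isBounded.subset_closedBall_lt 0 0
  have hKnorm : ∀ p ∈ tsupport W, |p.1| ≤ RR ∧ |p.2.1| ≤ RR ∧ ‖p.2.2‖ ≤ RR := by
    intro p hp
    have h := mem_closedBall_zero_iff.1 (hKball hp)
    exact ⟨le_trans (norm_fst_le p) h,
      le_trans (le_trans (norm_fst_le p.2) (norm_snd_le p)) h,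
      le_trans (le_trans (norm_snd_le p.2) (norm_snd_le p)) h⟩
  obtain ⟨a, hapos, haRR, haK⟩ : ∃ a : ℝ, 0 < a ∧ a ≤ RR ∧ ∀ p ∈ tsupport W, a ≤ p.2.1 := by
    rcases (tsupport W).eq_empty_or_nonempty with hemp | hne
    · exact ⟨RR, hRRpos, le_rfl, fun p hp => by
        rw [hemp] at hp; exact absurd hp (Set.notMem_empty p)⟩
    · obtain ⟨p₀, hp₀, hmin⟩ := hKc.exists_isMinOn hne
        ((continuous_fst.comp continuous_snd).continuousOn)
      refine ⟨p₀.2.1, hWsupp hp₀, le_trans (le_abs_self _) (hKnorm p₀ hp₀).2.1,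
        fun p hp => isMinOn_iff.1 hmin p hp⟩
  have hdphiC : Continuous (dphi W) := continuous_dphi hW
  have hdrC : Continuous (dr W) := continuous_dr hW
  have hsupdphi : Function.support (dphi W) ⊆ tsupport W := fun p hp => by
    by_contra hc; exact hp (dphi_zero hc)
  have hsupdr : Function.support (dr W) ⊆ tsupport W := fun p hp => by
    by_contra hc; exact hp (dr_zero hc)
  obtain ⟨Mφ, hMφ⟩ : ∃ M : ℝ, ∀ p, |dphi W p| ≤ M := by
    obtain ⟨M, hM⟩ := (hWc.mono' hsupdphi).exists_bound_of_continuous hdphiC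
    exact ⟨M, fun p => by simpa [Real.norm_eq_abs] using hM p⟩
  obtain ⟨Mr, hMr⟩ : ∃ M : ℝ, ∀ p, |dr W p| ≤ M := by
    obtain ⟨M, hM⟩ := (hWc.mono' hsupdr).exists_bound_of_continuous hdrC
    exact ⟨M, fun p => by simpa [Real.norm_eq_abs] using hM p⟩
  have hMφ0 : 0 ≤ Mφ := le_trans (abs_nonneg _) (hMφ (0, 1, 0))
  have hMr0 : 0 ≤ Mr := le_trans (abs_nonneg _) (hMr (0, 1, 0))
  have hSZC : Continuous (fun p : ℝ × ℝ × (Fin m → ℝ) => ∑ ξ, |dz ξ W p| ^ 2) :=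
    continuous_finset_sum _ (fun ξ _ => ((continuous_dz hW ξ).abs.pow 2))
  have hSZ0 : ∀ p ∉ tsupport W, (∑ ξ, |dz ξ W p| ^ 2) = 0 := fun p hp =>
    Finset.sum_eq_zero fun ξ _ => by rw [dz_zero hp]; simp
  have hSZnonneg : ∀ p : ℝ × ℝ × (Fin m → ℝ), 0 ≤ ∑ ξ, |dz ξ W p| ^ 2 := fun p =>
    Finset.sum_nonneg fun ξ _ => by positivity
  obtain ⟨MZ, hMZ⟩ : ∃ M : ℝ, ∀ p, (∑ ξ, |dz ξ W p| ^ 2) ≤ M := by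
    obtain ⟨M, hM⟩ := (hWc.mono' (fun p hp => by
        by_contra hc; exact hp (hSZ0 p hc))).exists_bound_of_continuous hSZC
    exact ⟨M, fun p => le_trans (le_abs_self _) (by simpa [Real.norm_eq_abs] using hM p)⟩
  have hMZ0 : 0 ≤ MZ := le_trans (hSZnonneg (0,1,0)) (hMZ (0, 1, 0))
  have hrpm : ∀ c : ℝ, Measurable fun r : ℝ => r ^ c := fun c => by measurability
  have hKmem : ∀ (u v : ℝ) (y : Fin m → ℝ), (u, v, y) ∈ tsupport W →
      -RR ≤ u ∧ u ≤ RR ∧ a ≤ v ∧ v ≤ RR ∧ ‖y‖ ≤ RR := by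
    intro u v y hp
    obtain ⟨h1, h2, h3⟩ := hKnorm _ hp
    exact ⟨(abs_le.1 h1).1, (abs_le.1 h1).2, haK _ hp, (abs_le.1 h2).2, h3⟩
  have hIoiIccFin : ∀ c d : ℝ, (volume.restrict (Set.Ioi (0:ℝ))) (Set.Icc c d) < ⊤ := by
    intro c d
    rw [Measure.restrict_apply measurableSet_Icc]
    exact lt_of_le_of_lt (measure_mono Set.inter_subset_left)
      (by rw [Real.volume_Icc]; exact ENNReal.ofReal_lt_top)
  have hIccFin : ∀ c d : ℝ, (volume : Measure ℝ) (Set.Icc c d) < ⊤ := fun c d => by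
    rw [Real.volume_Icc]; exact ENNReal.ofReal_lt_top
  have hMmid0 : 0 ≤ Mφ^2/a^2 + Mr^2 + MZ :=
    add_nonneg (add_nonneg (by positivity) (sq_nonneg _)) hMZ0
  set Cb : ℝ := (a^(2*(b+1)) + RR^(2*(b+1))) * (Mφ^2/a^2 + Mr^2 + MZ) * RR with hCbdef
  have hCb0 : 0 ≤ Cb := by
    rw [hCbdef]
    have h1 : (0:ℝ) ≤ a^(2*(b+1)) := Real.rpow_nonneg hapos.le _
    have h2 : (0:ℝ) ≤ RR^(2*(b+1)) := Real.rpow_nonneg hRRpos.le _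
    exact mul_nonneg (mul_nonneg (by linarith) hMmid0) hRRpos.le
  have hmid0 : ∀ (z : Fin m → ℝ) (r φ : ℝ), (φ, r, z) ∉ tsupport W →
      (|dphi W (φ, r, z) / r| ^ 2 + |dr W (φ, r, z)| ^ 2 + ∑ ξ, |dz ξ W (φ, r, z)| ^ 2) = 0 := by
    intro z r φ hp
    rw [dphi_zero hp, dr_zero hp, hSZ0 _ hp]
    simp
  have hmidbound : ∀ (z : Fin m → ℝ) (r φ : ℝ), a ≤ r →
      (|dphi W (φ, r, z) / r| ^ 2 + |dr W (φ, r, z)| ^ 2 + ∑ ξ, |dz ξ W (φ, r, z)| ^ 2)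
        ≤ Mφ^2/a^2 + Mr^2 + MZ := by
    intro z r φ har
    have h1 : |dphi W (φ, r, z) / r| ^ 2 ≤ Mφ^2/a^2 := by
      rw [abs_div, div_pow]
      refine div_le_div₀ (sq_nonneg Mφ) (pow_le_pow_left₀ (abs_nonneg _) (hMφ _) 2)
        (by positivity) ?_
      rw [abs_of_pos (lt_of_lt_of_le hapos har)]
      exact pow_le_pow_left₀ hapos.le har 2
    have h2 : |dr W (φ, r, z)| ^ 2 ≤ Mr^2 := pow_le_pow_left₀ (abs_nonneg _) (hMr _) 2
    linarith [hMZ (φ, r, z)]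
  have hmidnonneg : ∀ (z : Fin m → ℝ) (r φ : ℝ),
      0 ≤ |dphi W (φ, r, z) / r| ^ 2 + |dr W (φ, r, z)| ^ 2 + ∑ ξ, |dz ξ W (φ, r, z)| ^ 2 := by
    intro z r φ
    have h := hSZnonneg (φ, r, z)
    positivity
  have hFULL0 : ∀ (z : Fin m → ℝ) (r φ : ℝ), (φ, r, z) ∉ tsupport W →
      r ^ (2 * (b + 1)) * (|dphi W (φ, r, z) / r| ^ 2 + |dr W (φ, r, z)| ^ 2 +
        ∑ ξ, |dz ξ W (φ, r, z)| ^ 2) * r = 0 := by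
    intro z r φ hp
    rw [hmid0 z r φ hp, mul_zero, zero_mul]
  have hFr0 : ∀ (z : Fin m → ℝ) (r : ℝ), r ∉ Set.Icc a RR →
      (∫ φ : ℝ, r ^ (2 * (b + 1)) * (|dphi W (φ, r, z) / r| ^ 2 + |dr W (φ, r, z)| ^ 2 +
        ∑ ξ, |dz ξ W (φ, r, z)| ^ 2) * r) = 0 := by
    intro z r hr
    refine integral_eq_zero_of_eq_zero fun φ => hFULL0 z r φ fun hmem =>
      hr ⟨(hKmem _ _ _ hmem).2.2.1, (hKmem _ _ _ hmem).2.2.2.1⟩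
  have hFrbound : ∀ (z : Fin m → ℝ) (r : ℝ),
      |∫ φ : ℝ, r ^ (2 * (b + 1)) * (|dphi W (φ, r, z) / r| ^ 2 + |dr W (φ, r, z)| ^ 2 +
        ∑ ξ, |dz ξ W (φ, r, z)| ^ 2) * r| ≤ Cb * (2*RR) := by
    intro z r
    by_cases hr : r ∈ Set.Icc a RR
    · have hrpos : 0 < r := lt_of_lt_of_le hapos hr.1
      have hbφ : ∀ φ : ℝ, |r ^ (2 * (b + 1)) * (|dphi W (φ, r, z) / r| ^ 2 + |dr W (φ, r, z)| ^ 2 +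
        ∑ ξ, |dz ξ W (φ, r, z)| ^ 2) * r| ≤ Cb := by
        intro φ
        have hX : (0:ℝ) ≤ r ^ (2*(b+1)) := Real.rpow_nonneg hrpos.le _
        have hXle : r ^ (2*(b+1)) ≤ a^(2*(b+1)) + RR^(2*(b+1)) :=
          rpow_le_add_of_mem hapos hr.1 hr.2
        have hm := hmidbound z r φ hr.1
        have hmn := hmidnonneg z r φ
        rw [abs_mul, abs_mul, abs_of_nonneg hX, abs_of_nonneg hmn, hCbdef]
        have hrRR : |r| ≤ RR := abs_le.2 ⟨by linarith [hr.1], hr.2⟩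
        refine mul_le_mul (mul_le_mul hXle hm hmn (by linarith [Real.rpow_nonneg hapos.le (2*(b+1)), Real.rpow_nonneg hRRpos.le (2*(b+1))])) hrRR (abs_nonneg _) ?_
        exact mul_nonneg (by linarith [Real.rpow_nonneg hapos.le (2*(b+1)), Real.rpow_nonneg hRRpos.le (2*(b+1))]) hMmid0
      have hvan : ∀ φ : ℝ, φ ∉ Set.Icc (-RR) RR → r ^ (2 * (b + 1)) * (|dphi W (φ, r, z) / r| ^ 2 + |dr W (φ, r, z)| ^ 2 +
        ∑ ξ, |dz ξ W (φ, r, z)| ^ 2) * r = 0 := fun φ hφ =>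
        hFULL0 z r φ fun hmem => hφ ⟨(hKmem _ _ _ hmem).1, (hKmem _ _ _ hmem).2.1⟩
      calc |∫ φ : ℝ, r ^ (2 * (b + 1)) * (|dphi W (φ, r, z) / r| ^ 2 + |dr W (φ, r, z)| ^ 2 +
        ∑ ξ, |dz ξ W (φ, r, z)| ^ 2) * r| ≤ Cb * (RR - (-RR)) :=
            abs_integral_le_of_bdd_supp (by linarith) hCb0 hvan hbφ
        _ = Cb * (2*RR) := by ring
    · rw [hFr0 z r hr]
      rw [abs_zero]
      exact mul_nonneg hCb0 (by linarith)
  have hjoint3 : Measurable fun q : ((Fin m → ℝ) × ℝ) × ℝ =>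
      q.1.2 ^ (2 * (b + 1)) * (|dphi W (q.2, q.1.2, q.1.1) / q.1.2| ^ 2 + |dr W (q.2, q.1.2, q.1.1)| ^ 2 +
        ∑ ξ, |dz ξ W (q.2, q.1.2, q.1.1)| ^ 2) * q.1.2 := by
    have htr : Measurable fun q : ((Fin m → ℝ) × ℝ) × ℝ =>
        ((q.2, q.1.2, q.1.1) : ℝ × ℝ × (Fin m → ℝ)) :=
      measurable_snd.prodMk (measurable_fst.snd.prodMk measurable_fst.fst)
    refine Measurable.mul (Measurable.mul ((hrpm _).comp measurable_fst.snd) ?_) measurable_fst.snd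
    refine Measurable.add (Measurable.add ?_ ?_) ?_
    · exact ((hdphiC.measurable.comp htr).div measurable_fst.snd).abs.pow_const 2
    · exact (hdrC.measurable.comp htr).abs.pow_const 2
    · exact Finset.measurable_sum _ fun ξ _ =>
        ((continuous_dz hW ξ).measurable.comp htr).abs.pow_const 2
  have hFrSM : StronglyMeasurable fun q : (Fin m → ℝ) × ℝ => ∫ φ : ℝ, q.2 ^ (2 * (b + 1)) * (|dphi W (φ, q.2, q.1) / q.2| ^ 2 + |dr W (φ, q.2, q.1)| ^ 2 +
        ∑ ξ, |dz ξ W (φ, q.2, q.1)| ^ 2) * q.2 :=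
    hjoint3.stronglyMeasurable.integral_prod_right'
  have hjoint2 : ∀ z : Fin m → ℝ, Measurable fun q : ℝ × ℝ => q.1 ^ (2 * (b + 1)) * (|dphi W (q.2, q.1, z) / q.1| ^ 2 + |dr W (q.2, q.1, z)| ^ 2 +
        ∑ ξ, |dz ξ W (q.2, q.1, z)| ^ 2) * q.1 := by
    intro z
    have htr : Measurable fun q : ℝ × ℝ => ((q.2, q.1, z) : ℝ × ℝ × (Fin m → ℝ)) :=
      measurable_snd.prodMk (measurable_fst.prodMk measurable_const)
    refine Measurable.mul (Measurable.mul ((hrpm _).comp measurable_fst) ?_) measurable_fst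
    refine Measurable.add (Measurable.add ?_ ?_) ?_
    · exact ((hdphiC.measurable.comp htr).div measurable_fst).abs.pow_const 2
    · exact (hdrC.measurable.comp htr).abs.pow_const 2
    · exact Finset.measurable_sum _ fun ξ _ =>
        ((continuous_dz hW ξ).measurable.comp htr).abs.pow_const 2
  have hB2innerInt : ∀ z : Fin m → ℝ,
      IntegrableOn (fun r : ℝ => ∫ φ : ℝ, r ^ (2 * (b + 1)) * (|dphi W (φ, r, z) / r| ^ 2 + |dr W (φ, r, z)| ^ 2 +
        ∑ ξ, |dz ξ W (φ, r, z)| ^ 2) * r) (Set.Ioi 0) := by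
    intro z
    exact integrable_of_bdd_supp
      ((hjoint2 z).stronglyMeasurable.integral_prod_right'.aestronglyMeasurable)
      measurableSet_Icc (hIoiIccFin a RR) (hFrbound z) (hFr0 z)
  -- the key pointwise-in-`z` estimate
  have hkey : ∀ z : Fin m → ℝ,
      (∫ r in Set.Ioi (0 : ℝ), ∫ φ : ℝ,
          r ^ (2 * b) * |W (φ, r, z) - W (φ + Φ' (r, z), r + R' (r, z), z)| ^ 2 * r)
      ≤ (4 + 6 * Kb) * ε₀ ^ 2 * (∫ r in Set.Ioi (0 : ℝ), ∫ φ : ℝ,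
          r ^ (2 * (b + 1)) * (|dphi W (φ, r, z) / r| ^ 2 + |dr W (φ, r, z)| ^ 2 +
            ∑ ξ, |dz ξ W (φ, r, z)| ^ 2) * r) := by
    intro z
    set F2 : ℝ → ℝ := fun v => ∫ φ : ℝ, (dr W (φ, v, z))^2 with hF2def
    set G1 : ℝ → ℝ := fun r => ∫ u : ℝ, (dphi W (u, r, z))^2 with hG1def
    set T : ℝ → ℝ := fun r => ∫ v : ℝ,
      (if v ∈ Set.Icc ((1-ε₀)*r) ((1+ε₀)*r) then F2 v else 0) with hTdef
    have hF2meas : Measurable F2 := by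
      rw [hF2def]
      exact ((hdrC.comp (show Continuous fun q : ℝ × ℝ => ((q.2, q.1, z) : ℝ×ℝ×(Fin m → ℝ))
        by fun_prop)).pow 2).stronglyMeasurable.integral_prod_right'.measurable
    have hG1meas : Measurable G1 := by
      rw [hG1def]
      exact ((hdphiC.comp (show Continuous fun q : ℝ × ℝ => ((q.2, q.1, z) : ℝ×ℝ×(Fin m → ℝ))
        by fun_prop)).pow 2).stronglyMeasurable.integral_prod_right'.measurable
    have hF2nonneg : ∀ v, 0 ≤ F2 v := fun v => by
      rw [hF2def]; exact integral_nonneg fun φ => sq_nonneg _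
    have hG1nonneg : ∀ r, 0 ≤ G1 r := fun r => by
      rw [hG1def]; exact integral_nonneg fun u => sq_nonneg _
    have hF2supp : ∀ v, v ∉ Set.Icc a RR → F2 v = 0 := by
      intro v hv
      rw [hF2def]
      refine integral_eq_zero_of_eq_zero fun φ => ?_
      have hp : (φ, v, z) ∉ tsupport W := fun hmem =>
        hv ⟨(hKmem _ _ _ hmem).2.2.1, (hKmem _ _ _ hmem).2.2.2.1⟩
      rw [dr_zero hp]; simp
    have hG1supp : ∀ r, r ∉ Set.Icc a RR → G1 r = 0 := by
      intro r hr
      rw [hG1def]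
      refine integral_eq_zero_of_eq_zero fun u => ?_
      have hp : (u, r, z) ∉ tsupport W := fun hmem =>
        hr ⟨(hKmem _ _ _ hmem).2.2.1, (hKmem _ _ _ hmem).2.2.2.1⟩
      rw [dphi_zero hp]; simp
    have hF2bdd : ∀ v, |F2 v| ≤ Mr^2*(2*RR) := by
      intro v
      rw [hF2def]
      have hvan : ∀ φ : ℝ, φ ∉ Set.Icc (-RR) RR → (dr W (φ, v, z))^2 = 0 := by
        intro φ hφ
        have hp : (φ, v, z) ∉ tsupport W := fun hmem =>
          hφ ⟨(hKmem _ _ _ hmem).1, (hKmem _ _ _ hmem).2.1⟩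
        rw [dr_zero hp]; simp
      have hbd : ∀ φ : ℝ, |(dr W (φ, v, z))^2| ≤ Mr^2 := fun φ => by
        rw [abs_pow]; exact pow_le_pow_left₀ (abs_nonneg _) (hMr _) 2
      calc |∫ φ : ℝ, (dr W (φ, v, z))^2| ≤ Mr^2 * (RR - (-RR)) :=
            abs_integral_le_of_bdd_supp (by linarith) (sq_nonneg _) hvan hbd
        _ = Mr^2*(2*RR) := by ring
    have hG1bdd : ∀ r, |G1 r| ≤ Mφ^2*(2*RR) := by
      intro r
      rw [hG1def]
      have hvan : ∀ u : ℝ, u ∉ Set.Icc (-RR) RR → (dphi W (u, r, z))^2 = 0 := by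
        intro u hu
        have hp : (u, r, z) ∉ tsupport W := fun hmem =>
          hu ⟨(hKmem _ _ _ hmem).1, (hKmem _ _ _ hmem).2.1⟩
        rw [dphi_zero hp]; simp
      have hbd : ∀ u : ℝ, |(dphi W (u, r, z))^2| ≤ Mφ^2 := fun u => by
        rw [abs_pow]; exact pow_le_pow_left₀ (abs_nonneg _) (hMφ _) 2
      calc |∫ u : ℝ, (dphi W (u, r, z))^2| ≤ Mφ^2 * (RR - (-RR)) :=
            abs_integral_le_of_bdd_supp (by linarith) (sq_nonneg _) hvan hbd
        _ = Mφ^2*(2*RR) := by ring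
    -- Step 1 : the inner (angular) estimate for fixed `r`
    have hstep1 : ∀ r : ℝ, r ∈ Set.Ioi (0:ℝ) →
        (∫ φ : ℝ, r ^ (2 * b) * |W (φ, r, z) - W (φ + Φ' (r, z), r + R' (r, z), z)| ^ 2 * r)
        ≤ 4*ε₀^2*(r^(2*b)*r*G1 r) + 2*ε₀*(r^(2*b)*r*r*T r) := by
      intro r hrI
      have hr : 0 < r := hrI
      have hs := hΦb r hr z
      have hρ := hRb r hr z
      have hsle := abs_le.1 hs
      have hρle := abs_le.1 hρ
      have hεr0 : (0:ℝ) ≤ ε₀*r := mul_nonneg hε.le hr.le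
      have hrb0 : (0:ℝ) ≤ r ^ (2*b) := Real.rpow_nonneg hr.le _
      have hcphi : Continuous fun u : ℝ => dphi W (u, r, z) := hdphiC.comp (by fun_prop)
      have hpt : ∀ φ : ℝ,
          r ^ (2 * b) * |W (φ, r, z) - W (φ + Φ' (r, z), r + R' (r, z), z)| ^ 2 * r
          ≤ r^(2*b)*r*((2*ε₀) *
              (∫ u : ℝ, (if u ∈ Set.Icc (φ - ε₀) (φ + ε₀) then (dphi W (u, r, z))^2 else 0))
            + (2*(ε₀*r)) * (∫ v : ℝ, (if v ∈ Set.Icc ((1-ε₀)*r) ((1+ε₀)*r)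
                then (dr W (φ + Φ' (r, z), v, z))^2 else 0))) := by
        intro φ
        have hCS1 : (W (φ, r, z) - W (φ + Φ' (r, z), r, z))^2
            ≤ ε₀ * (∫ u : ℝ, (if u ∈ Set.Icc (φ - ε₀) (φ + ε₀)
                then (dphi W (u, r, z))^2 else 0)) := by
          have hFTC : (∫ u in φ..(φ + Φ' (r, z)), dphi W (u, r, z))
              = W (φ + Φ' (r, z), r, z) - W (φ, r, z) :=
            intervalIntegral.integral_eq_sub_of_hasDerivAt
              (fun u _ => hasDerivAt_slice_phi hW u r z) (hcphi.intervalIntegrable _ _)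
          have hsq := sq_intervalIntegral_le hcphi φ (φ + Φ' (r, z))
          rw [hFTC] at hsq
          have habs : |φ + Φ' (r, z) - φ| = |Φ' (r, z)| := by congr 1; ring
          rw [habs] at hsq
          have hII : IntegrableOn (fun u => (dphi W (u, r, z))^2)
              (Set.Icc (φ - ε₀) (φ + ε₀)) := (hcphi.pow 2).integrableOn_Icc
          have hsub : Set.uIoc φ (φ + Φ' (r, z)) ⊆ Set.Icc (φ - ε₀) (φ + ε₀) := by
            intro u hu
            rcases Set.mem_uIoc.1 hu with ⟨h1, h2⟩ | ⟨h1, h2⟩ <;>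
              exact ⟨by linarith [hsle.1, hsle.2], by linarith [hsle.1, hsle.2]⟩
          have hmono : (∫ u in Set.uIoc φ (φ + Φ' (r, z)), (dphi W (u, r, z))^2)
              ≤ ∫ u in Set.Icc (φ - ε₀) (φ + ε₀), (dphi W (u, r, z))^2 :=
            setIntegral_mono_set hII (Filter.Eventually.of_forall fun u => sq_nonneg _)
              (HasSubset.Subset.eventuallyLE hsub)
          have hind : (∫ u in Set.Icc (φ - ε₀) (φ + ε₀), (dphi W (u, r, z))^2)
              = ∫ u : ℝ, (if u ∈ Set.Icc (φ - ε₀) (φ + ε₀) then (dphi W (u, r, z))^2 else 0) := by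
            rw [← integral_indicator measurableSet_Icc]
            congr 1; funext u; rw [Set.indicator_apply]
          have hnn : 0 ≤ ∫ u in Set.uIoc φ (φ + Φ' (r, z)), (dphi W (u, r, z))^2 :=
            setIntegral_nonneg measurableSet_uIoc fun u _ => sq_nonneg _
          calc (W (φ, r, z) - W (φ + Φ' (r, z), r, z))^2
              = (W (φ + Φ' (r, z), r, z) - W (φ, r, z))^2 := by ring
            _ ≤ |Φ' (r, z)| * ∫ u in Set.uIoc φ (φ + Φ' (r, z)), (dphi W (u, r, z))^2 := hsq
            _ ≤ ε₀ * ∫ u : ℝ, (if u ∈ Set.Icc (φ - ε₀) (φ + ε₀)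
                then (dphi W (u, r, z))^2 else 0) := by
                rw [← hind]; exact mul_le_mul hs hmono hnn hε.le
        have hcdr2 : Continuous fun v : ℝ => dr W (φ + Φ' (r, z), v, z) := hdrC.comp (by fun_prop)
        have hCS2 : (W (φ + Φ' (r, z), r, z) - W (φ + Φ' (r, z), r + R' (r, z), z))^2
            ≤ (ε₀*r) * (∫ v : ℝ, (if v ∈ Set.Icc ((1-ε₀)*r) ((1+ε₀)*r)
                then (dr W (φ + Φ' (r, z), v, z))^2 else 0)) := by
          have hFTC : (∫ v in r..(r + R' (r, z)), dr W (φ + Φ' (r, z), v, z))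
              = W (φ + Φ' (r, z), r + R' (r, z), z) - W (φ + Φ' (r, z), r, z) :=
            intervalIntegral.integral_eq_sub_of_hasDerivAt
              (fun v _ => hasDerivAt_slice_r hW (φ + Φ' (r, z)) v z)
              (hcdr2.intervalIntegrable _ _)
          have hsq := sq_intervalIntegral_le hcdr2 r (r + R' (r, z))
          rw [hFTC] at hsq
          have habs : |r + R' (r, z) - r| = |R' (r, z)| := by congr 1; ring
          rw [habs] at hsq
          have hII : IntegrableOn (fun v => (dr W (φ + Φ' (r, z), v, z))^2)
              (Set.Icc ((1-ε₀)*r) ((1+ε₀)*r)) := (hcdr2.pow 2).integrableOn_Icc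
          have hsub : Set.uIoc r (r + R' (r, z)) ⊆ Set.Icc ((1-ε₀)*r) ((1+ε₀)*r) := by
            intro v hv
            have e1 : (1-ε₀)*r = r - ε₀*r := by ring
            have e2 : (1+ε₀)*r = r + ε₀*r := by ring
            rw [Set.mem_Icc, e1, e2]
            rcases Set.mem_uIoc.1 hv with ⟨h1, h2⟩ | ⟨h1, h2⟩ <;>
              exact ⟨by linarith [hρle.1, hρle.2, hεr0], by linarith [hρle.1, hρle.2, hεr0]⟩
          have hmono : (∫ v in Set.uIoc r (r + R' (r, z)), (dr W (φ + Φ' (r, z), v, z))^2)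
              ≤ ∫ v in Set.Icc ((1-ε₀)*r) ((1+ε₀)*r), (dr W (φ + Φ' (r, z), v, z))^2 :=
            setIntegral_mono_set hII (Filter.Eventually.of_forall fun v => sq_nonneg _)
              (HasSubset.Subset.eventuallyLE hsub)
          have hind : (∫ v in Set.Icc ((1-ε₀)*r) ((1+ε₀)*r), (dr W (φ + Φ' (r, z), v, z))^2)
              = ∫ v : ℝ, (if v ∈ Set.Icc ((1-ε₀)*r) ((1+ε₀)*r)
                  then (dr W (φ + Φ' (r, z), v, z))^2 else 0) := by
            rw [← integral_indicator measurableSet_Icc]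
            congr 1; funext v; rw [Set.indicator_apply]
          have hnn : 0 ≤ ∫ v in Set.uIoc r (r + R' (r, z)), (dr W (φ + Φ' (r, z), v, z))^2 :=
            setIntegral_nonneg measurableSet_uIoc fun v _ => sq_nonneg _
          calc (W (φ + Φ' (r, z), r, z) - W (φ + Φ' (r, z), r + R' (r, z), z))^2
              = (W (φ + Φ' (r, z), r + R' (r, z), z) - W (φ + Φ' (r, z), r, z))^2 := by ring
            _ ≤ |R' (r, z)| * ∫ v in Set.uIoc r (r + R' (r, z)),
                  (dr W (φ + Φ' (r, z), v, z))^2 := hsq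
            _ ≤ (ε₀*r) * ∫ v : ℝ, (if v ∈ Set.Icc ((1-ε₀)*r) ((1+ε₀)*r)
                  then (dr W (φ + Φ' (r, z), v, z))^2 else 0) := by
                rw [← hind]; exact mul_le_mul hρ hmono hnn hεr0
        calc r ^ (2 * b) * |W (φ, r, z) - W (φ + Φ' (r, z), r + R' (r, z), z)| ^ 2 * r
            = r^(2*b)*r*((W (φ, r, z) - W (φ + Φ' (r, z), r + R' (r, z), z))^2) := by
              rw [sq_abs]; ring
          _ ≤ r^(2*b)*r*((2*ε₀) *
                (∫ u : ℝ, (if u ∈ Set.Icc (φ - ε₀) (φ + ε₀) then (dphi W (u, r, z))^2 else 0))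
              + (2*(ε₀*r)) * (∫ v : ℝ, (if v ∈ Set.Icc ((1-ε₀)*r) ((1+ε₀)*r)
                  then (dr W (φ + Φ' (r, z), v, z))^2 else 0))) := by
              refine mul_le_mul_of_nonneg_left ?_ (mul_nonneg hrb0 hr.le)
              nlinarith [hCS1, hCS2, sq_nonneg ((W (φ, r, z) - W (φ + Φ' (r, z), r, z))
                - (W (φ + Φ' (r, z), r, z) - W (φ + Φ' (r, z), r + R' (r, z), z)))]
      have hPprodInt : Integrable (Function.uncurry fun φ u : ℝ =>
          (if u ∈ Set.Icc (φ - ε₀) (φ + ε₀) then (dphi W (u, r, z))^2 else 0))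
          ((volume : Measure ℝ).prod volume) := by
        have hmeas : Measurable fun q : ℝ × ℝ =>
            (if q.2 ∈ Set.Icc (q.1 - ε₀) (q.1 + ε₀) then (dphi W (q.2, r, z))^2 else 0) := by
          refine Measurable.ite ?_
            ((hdphiC.measurable.comp (measurable_snd.prodMk measurable_const)).pow_const 2)
            measurable_const
          have hset : {q : ℝ × ℝ | q.2 ∈ Set.Icc (q.1 - ε₀) (q.1 + ε₀)}
              = {q : ℝ × ℝ | q.1 - ε₀ ≤ q.2} ∩ {q : ℝ × ℝ | q.2 ≤ q.1 + ε₀} := by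
            ext q; simp [Set.mem_Icc]
          rw [hset]
          exact (measurableSet_le (measurable_fst.sub measurable_const) measurable_snd).inter
            (measurableSet_le measurable_snd (measurable_fst.add measurable_const))
        have hPbd : ∀ q : ℝ × ℝ,
            |(if q.2 ∈ Set.Icc (q.1 - ε₀) (q.1 + ε₀) then (dphi W (q.2, r, z))^2 else 0)|
              ≤ Mφ^2 := by
          intro q
          by_cases h : q.2 ∈ Set.Icc (q.1 - ε₀) (q.1 + ε₀)
          · rw [if_pos h, abs_pow]
            exact pow_le_pow_left₀ (abs_nonneg _) (hMφ _) 2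
          · rw [if_neg h, abs_zero]; exact sq_nonneg _
        have hPsup : ∀ q : ℝ × ℝ, q ∉ (Set.Icc (-(RR+ε₀)) (RR+ε₀)) ×ˢ (Set.Icc (-RR) RR) →
            (if q.2 ∈ Set.Icc (q.1 - ε₀) (q.1 + ε₀) then (dphi W (q.2, r, z))^2 else 0) = 0 := by
          intro q hq
          by_cases h : q.2 ∈ Set.Icc (q.1 - ε₀) (q.1 + ε₀)
          · by_cases h2 : dphi W (q.2, r, z) = 0
            · rw [if_pos h, h2]; simp
            · exfalso
              have hmem : (q.2, r, z) ∈ tsupport W := hsupdphi h2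
              have h3 := (hKmem _ _ _ hmem).1
              have h4 := (hKmem _ _ _ hmem).2.1
              rcases Set.mem_Icc.1 h with ⟨ha1, ha2⟩
              exact hq (Set.mem_prod.2 ⟨Set.mem_Icc.2 ⟨by linarith, by linarith⟩,
                Set.mem_Icc.2 ⟨h3, h4⟩⟩)
          · rw [if_neg h]
        exact integrable_prod_of_bdd_supp hmeas
          (measurableSet_Icc (a := -(RR+ε₀)) (b := RR+ε₀)) (measurableSet_Icc (a := -RR) (b := RR))
          (hIccFin _ _) (hIccFin _ _) (M := Mφ^2) hPbd hPsup
      have hQprodInt : Integrable (Function.uncurry fun φ v : ℝ =>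
          (if v ∈ Set.Icc ((1-ε₀)*r) ((1+ε₀)*r) then (dr W (φ + Φ' (r, z), v, z))^2 else 0))
          ((volume : Measure ℝ).prod volume) := by
        have hmeas : Measurable fun q : ℝ × ℝ =>
            (if q.2 ∈ Set.Icc ((1-ε₀)*r) ((1+ε₀)*r)
              then (dr W (q.1 + Φ' (r, z), q.2, z))^2 else 0) :=
          Measurable.ite (measurable_snd measurableSet_Icc)
            ((hdrC.measurable.comp ((measurable_fst.add_const _).prodMk
              (measurable_snd.prodMk measurable_const))).pow_const 2) measurable_const
        have hQbd : ∀ q : ℝ × ℝ,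
            |(if q.2 ∈ Set.Icc ((1-ε₀)*r) ((1+ε₀)*r)
              then (dr W (q.1 + Φ' (r, z), q.2, z))^2 else 0)| ≤ Mr^2 := by
          intro q
          by_cases h : q.2 ∈ Set.Icc ((1-ε₀)*r) ((1+ε₀)*r)
          · rw [if_pos h, abs_pow]
            exact pow_le_pow_left₀ (abs_nonneg _) (hMr _) 2
          · rw [if_neg h, abs_zero]; exact sq_nonneg _
        have hQsup : ∀ q : ℝ × ℝ,
            q ∉ (Set.Icc (-(RR+1)) (RR+1)) ×ˢ (Set.Icc ((1-ε₀)*r) ((1+ε₀)*r)) →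
            (if q.2 ∈ Set.Icc ((1-ε₀)*r) ((1+ε₀)*r)
              then (dr W (q.1 + Φ' (r, z), q.2, z))^2 else 0) = 0 := by
          intro q hq
          by_cases h : q.2 ∈ Set.Icc ((1-ε₀)*r) ((1+ε₀)*r)
          · by_cases h2 : dr W (q.1 + Φ' (r, z), q.2, z) = 0
            · rw [if_pos h, h2]; simp
            · exfalso
              have hmem : (q.1 + Φ' (r, z), q.2, z) ∈ tsupport W := hsupdr h2
              have h3 := (hKmem _ _ _ hmem).1
              have h4 := (hKmem _ _ _ hmem).2.1
              exact hq (Set.mem_prod.2 ⟨Set.mem_Icc.2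
                ⟨by linarith [hsle.1, hsle.2], by linarith [hsle.1, hsle.2]⟩, h⟩)
          · rw [if_neg h]
        exact integrable_prod_of_bdd_supp hmeas
          (measurableSet_Icc (a := -(RR+1)) (b := RR+1))
          (measurableSet_Icc (a := (1-ε₀)*r) (b := (1+ε₀)*r))
          (hIccFin _ _) (hIccFin _ _) (M := Mr^2) hQbd hQsup
      have hintP : Integrable (fun φ : ℝ => ∫ u : ℝ,
          (if u ∈ Set.Icc (φ - ε₀) (φ + ε₀) then (dphi W (u, r, z))^2 else 0)) volume :=
        hPprodInt.integral_prod_left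
      have hintQ : Integrable (fun φ : ℝ => ∫ v : ℝ,
          (if v ∈ Set.Icc ((1-ε₀)*r) ((1+ε₀)*r)
            then (dr W (φ + Φ' (r, z), v, z))^2 else 0)) volume :=
        hQprodInt.integral_prod_left
      have hmono1 := integral_mono_of_nonneg (μ := volume)
        (Filter.Eventually.of_forall fun φ =>
          mul_nonneg (mul_nonneg hrb0 (by positivity)) hr.le)
        (Integrable.const_mul ((hintP.const_mul (2*ε₀)).add (hintQ.const_mul (2*(ε₀*r))))
          (r^(2*b)*r))
        (Filter.Eventually.of_forall hpt)
      have hPswap : (∫ φ : ℝ, ∫ u : ℝ,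
          (if u ∈ Set.Icc (φ - ε₀) (φ + ε₀) then (dphi W (u, r, z))^2 else 0)) = 2*ε₀*G1 r := by
        rw [integral_integral_swap hPprodInt]
        have hinner : ∀ u : ℝ, (∫ φ : ℝ,
            (if u ∈ Set.Icc (φ - ε₀) (φ + ε₀) then (dphi W (u, r, z))^2 else 0))
            = 2*ε₀*(dphi W (u, r, z))^2 := by
          intro u
          have hcong : (fun φ : ℝ =>
              (if u ∈ Set.Icc (φ - ε₀) (φ + ε₀) then (dphi W (u, r, z))^2 else 0))
              = fun φ : ℝ => Set.indicator (Set.Icc (u - ε₀) (u + ε₀))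
                  (fun _ => (dphi W (u, r, z))^2) φ := by
            funext φ
            rw [Set.indicator_apply]
            refine if_congr ?_ rfl rfl
            rw [Set.mem_Icc, Set.mem_Icc]
            constructor <;> (rintro ⟨h1, h2⟩; exact ⟨by linarith, by linarith⟩)
          rw [hcong, integral_indicator_const _ measurableSet_Icc, smul_eq_mul, measureReal_def, Real.volume_Icc,
            ENNReal.toReal_ofReal (by linarith)]
          ring
        simp only [hinner]
        rw [integral_const_mul]
      have hQswap : (∫ φ : ℝ, ∫ v : ℝ,
          (if v ∈ Set.Icc ((1-ε₀)*r) ((1+ε₀)*r)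
            then (dr W (φ + Φ' (r, z), v, z))^2 else 0)) = T r := by
        rw [integral_integral_swap hQprodInt]
        have hinner : ∀ v : ℝ, (∫ φ : ℝ,
            (if v ∈ Set.Icc ((1-ε₀)*r) ((1+ε₀)*r) then (dr W (φ + Φ' (r, z), v, z))^2 else 0))
            = (if v ∈ Set.Icc ((1-ε₀)*r) ((1+ε₀)*r) then F2 v else 0) := by
          intro v
          by_cases h : v ∈ Set.Icc ((1-ε₀)*r) ((1+ε₀)*r)
          · simp only [if_pos h]
            simp only [hF2def]
            exact integral_add_right_eq_self (fun φ => (dr W (φ, v, z))^2) (Φ' (r, z))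
          · simp only [if_neg h]
            simp
        simp only [hinner]
        rfl
      calc (∫ φ : ℝ, r ^ (2 * b) * |W (φ, r, z) - W (φ + Φ' (r, z), r + R' (r, z), z)| ^ 2 * r)
          ≤ ∫ φ : ℝ, r^(2*b)*r*((2*ε₀) *
              (∫ u : ℝ, (if u ∈ Set.Icc (φ - ε₀) (φ + ε₀) then (dphi W (u, r, z))^2 else 0))
            + (2*(ε₀*r)) * (∫ v : ℝ, (if v ∈ Set.Icc ((1-ε₀)*r) ((1+ε₀)*r)
                then (dr W (φ + Φ' (r, z), v, z))^2 else 0))) := hmono1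
        _ = r^(2*b)*r*((2*ε₀) * (∫ φ : ℝ, ∫ u : ℝ,
              (if u ∈ Set.Icc (φ - ε₀) (φ + ε₀) then (dphi W (u, r, z))^2 else 0))
            + (2*(ε₀*r)) * (∫ φ : ℝ, ∫ v : ℝ, (if v ∈ Set.Icc ((1-ε₀)*r) ((1+ε₀)*r)
                then (dr W (φ + Φ' (r, z), v, z))^2 else 0))) := by
            rw [integral_const_mul, integral_add (hintP.const_mul _) (hintQ.const_mul _),
              integral_const_mul, integral_const_mul]
        _ = 4*ε₀^2*(r^(2*b)*r*G1 r) + 2*ε₀*(r^(2*b)*r*r*T r) := by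
            rw [hPswap, hQswap]; ring
    have hintG : IntegrableOn (fun r : ℝ => r^(2*b)*r*G1 r) (Set.Ioi 0) := by
      refine integrable_of_bdd_supp
        ((((hrpm (2*b)).mul measurable_id).mul hG1meas).aestronglyMeasurable)
        measurableSet_Icc (hIoiIccFin a RR)
        (M := (a^(2*b)+RR^(2*b))*RR*(Mφ^2*(2*RR))) ?_ ?_
      · intro x
        by_cases hx : x ∈ Set.Icc a RR
        · rw [abs_mul, abs_mul]
          have h1 : |x ^ (2*b)| ≤ a^(2*b)+RR^(2*b) := by
            rw [abs_of_nonneg (Real.rpow_nonneg (by linarith [hx.1]) _)]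
            exact rpow_le_add_of_mem hapos hx.1 hx.2
          have h2 : |x| ≤ RR := abs_le.2 ⟨by linarith [hx.1], hx.2⟩
          have h3 := hG1bdd x
          refine mul_le_mul (mul_le_mul h1 h2 (abs_nonneg _) ?_) h3 (abs_nonneg _) ?_
          · linarith [Real.rpow_nonneg hapos.le (2*b), Real.rpow_nonneg hRRpos.le (2*b)]
          · exact mul_nonneg (by
              linarith [Real.rpow_nonneg hapos.le (2*b), Real.rpow_nonneg hRRpos.le (2*b)])
              hRRpos.le
        · rw [hG1supp x hx, mul_zero, abs_zero]
          refine mul_nonneg (mul_nonneg ?_ hRRpos.le) (mul_nonneg (sq_nonneg _) (by linarith))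
          linarith [Real.rpow_nonneg hapos.le (2*b), Real.rpow_nonneg hRRpos.le (2*b)]
      · intro x hx
        rw [hG1supp x hx, mul_zero]
    have hTmeas : Measurable T := by
      rw [hTdef]
      have hmeas : Measurable fun q : ℝ × ℝ =>
          (if q.2 ∈ Set.Icc ((1-ε₀)*q.1) ((1+ε₀)*q.1) then F2 q.2 else 0) := by
        refine Measurable.ite ?_ (hF2meas.comp measurable_snd) measurable_const
        have hset : {q : ℝ × ℝ | q.2 ∈ Set.Icc ((1-ε₀)*q.1) ((1+ε₀)*q.1)}
            = {q : ℝ × ℝ | (1-ε₀)*q.1 ≤ q.2} ∩ {q : ℝ × ℝ | q.2 ≤ (1+ε₀)*q.1} := by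
          ext q; simp [Set.mem_Icc]
        rw [hset]
        exact (measurableSet_le (measurable_fst.const_mul _) measurable_snd).inter
          (measurableSet_le measurable_snd (measurable_fst.const_mul _))
      exact hmeas.stronglyMeasurable.integral_prod_right'.measurable
    have hTsupp : ∀ x, x ∉ Set.Icc (a/2) (2*RR) → T x = 0 := by
      intro x hxn
      simp only [hTdef]
      refine integral_eq_zero_of_eq_zero fun v => ?_
      by_cases hv : v ∈ Set.Icc a RR
      · rw [if_neg ?_]
        intro hc
        rcases Set.mem_Icc.1 hc with ⟨hc1, hc2⟩
        rcases Set.mem_Icc.1 hv with ⟨hv1, hv2⟩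
        have hxpos : 0 < x := by nlinarith
        refine hxn (Set.mem_Icc.2 ⟨?_, ?_⟩)
        · nlinarith [mul_nonneg hxpos.le (by linarith : (0:ℝ) ≤ 1/2 - ε₀)]
        · nlinarith [mul_nonneg hxpos.le (by linarith : (0:ℝ) ≤ 1/2 - ε₀)]
      · rw [hF2supp v hv]
        simp
    have hTbdd : ∀ x, |T x| ≤ (Mr^2*(2*RR))*(RR - a) := by
      intro x
      simp only [hTdef]
      have hvan : ∀ v : ℝ, v ∉ Set.Icc a RR →
          (if v ∈ Set.Icc ((1-ε₀)*x) ((1+ε₀)*x) then F2 v else 0) = 0 := by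
        intro v hv
        rw [hF2supp v hv]
        simp
      have hbd : ∀ v : ℝ, |(if v ∈ Set.Icc ((1-ε₀)*x) ((1+ε₀)*x) then F2 v else 0)|
          ≤ Mr^2*(2*RR) := by
        intro v
        by_cases h : v ∈ Set.Icc ((1-ε₀)*x) ((1+ε₀)*x)
        · rw [if_pos h]; exact hF2bdd v
        · rw [if_neg h, abs_zero]
          exact mul_nonneg (sq_nonneg _) (by linarith)
      exact abs_integral_le_of_bdd_supp haRR
        (mul_nonneg (sq_nonneg _) (by linarith)) hvan hbd
    have hintT : IntegrableOn (fun x : ℝ => x^(2*b)*x*x*T x) (Set.Ioi 0) := by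
      have ha2 : 0 < a/2 := by linarith
      refine integrable_of_bdd_supp
        (((((hrpm (2*b)).mul measurable_id).mul measurable_id).mul hTmeas).aestronglyMeasurable)
        measurableSet_Icc (hIoiIccFin (a/2) (2*RR))
        (M := ((a/2)^(2*b)+(2*RR)^(2*b))*(2*RR)*(2*RR)*((Mr^2*(2*RR))*(RR - a))) ?_ ?_
      · intro x
        by_cases hx : x ∈ Set.Icc (a/2) (2*RR)
        · rw [abs_mul, abs_mul, abs_mul]
          have h1 : |x ^ (2*b)| ≤ (a/2)^(2*b)+(2*RR)^(2*b) := by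
            rw [abs_of_nonneg (Real.rpow_nonneg (by linarith [hx.1]) _)]
            exact rpow_le_add_of_mem ha2 hx.1 hx.2
          have h2 : |x| ≤ 2*RR := abs_le.2 ⟨by linarith [hx.1], hx.2⟩
          have hnn1 : (0:ℝ) ≤ (a/2)^(2*b)+(2*RR)^(2*b) := by
            linarith [Real.rpow_nonneg ha2.le (2*b),
              Real.rpow_nonneg (by linarith : (0:ℝ) ≤ 2*RR) (2*b)]
          refine mul_le_mul (mul_le_mul (mul_le_mul h1 h2 (abs_nonneg _) hnn1) h2 (abs_nonneg _)
            (mul_nonneg hnn1 (by linarith))) (hTbdd x) (abs_nonneg _) ?_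
          exact mul_nonneg (mul_nonneg hnn1 (by linarith)) (by linarith)
        · rw [hTsupp x hx, mul_zero, abs_zero]
          have hnn1 : (0:ℝ) ≤ (a/2)^(2*b)+(2*RR)^(2*b) := by
            linarith [Real.rpow_nonneg ha2.le (2*b),
              Real.rpow_nonneg (by linarith : (0:ℝ) ≤ 2*RR) (2*b)]
          refine mul_nonneg (mul_nonneg (mul_nonneg hnn1 (by linarith)) (by linarith)) ?_
          exact mul_nonneg (mul_nonneg (sq_nonneg _) (by linarith)) (by linarith)
      · intro x hx
        rw [hTsupp x hx, mul_zero]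
    have hstep2 : (∫ r in Set.Ioi (0:ℝ), ∫ φ : ℝ,
        r ^ (2 * b) * |W (φ, r, z) - W (φ + Φ' (r, z), r + R' (r, z), z)| ^ 2 * r)
        ≤ 4*ε₀^2 * (∫ r in Set.Ioi (0:ℝ), r^(2*b)*r*G1 r)
          + 2*ε₀ * (∫ r in Set.Ioi (0:ℝ), r^(2*b)*r*r*T r) := by
      have h1 := integral_mono_of_nonneg (μ := volume.restrict (Set.Ioi 0))
        ((ae_restrict_iff' measurableSet_Ioi).2 (Filter.Eventually.of_forall fun r hr =>
          integral_nonneg fun φ => mul_nonneg (mul_nonneg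
            (Real.rpow_nonneg (le_of_lt hr) _) (by positivity)) (le_of_lt hr)))
        ((hintG.const_mul (4*ε₀^2)).add (hintT.const_mul (2*ε₀)))
        ((ae_restrict_iff' measurableSet_Ioi).2 (Filter.Eventually.of_forall fun r hr =>
          hstep1 r hr))
      calc (∫ r in Set.Ioi (0:ℝ), ∫ φ : ℝ,
          r ^ (2 * b) * |W (φ, r, z) - W (φ + Φ' (r, z), r + R' (r, z), z)| ^ 2 * r)
          ≤ ∫ r in Set.Ioi (0:ℝ),
              (4*ε₀^2*(r^(2*b)*r*G1 r) + 2*ε₀*(r^(2*b)*r*r*T r)) := h1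
        _ = 4*ε₀^2 * (∫ r in Set.Ioi (0:ℝ), r^(2*b)*r*G1 r)
              + 2*ε₀ * (∫ r in Set.Ioi (0:ℝ), r^(2*b)*r*r*T r) := by
            rw [integral_add (hintG.const_mul _) (hintT.const_mul _),
              integral_const_mul, integral_const_mul]
    have hintX2 : Integrable (fun v : ℝ => v^(2*(b+1))*v*F2 v) volume := by
      refine integrable_of_bdd_supp
        ((((hrpm (2*(b+1))).mul measurable_id).mul hF2meas).aestronglyMeasurable)
        measurableSet_Icc (hIccFin a RR)
        (M := (a^(2*(b+1))+RR^(2*(b+1)))*RR*(Mr^2*(2*RR))) ?_ ?_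
      · intro x
        by_cases hx : x ∈ Set.Icc a RR
        · rw [abs_mul, abs_mul]
          have h1 : |x ^ (2*(b+1))| ≤ a^(2*(b+1))+RR^(2*(b+1)) := by
            rw [abs_of_nonneg (Real.rpow_nonneg (by linarith [hx.1]) _)]
            exact rpow_le_add_of_mem hapos hx.1 hx.2
          have h2 : |x| ≤ RR := abs_le.2 ⟨by linarith [hx.1], hx.2⟩
          have hnn1 : (0:ℝ) ≤ a^(2*(b+1))+RR^(2*(b+1)) := by
            linarith [Real.rpow_nonneg hapos.le (2*(b+1)), Real.rpow_nonneg hRRpos.le (2*(b+1))]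
          refine mul_le_mul (mul_le_mul h1 h2 (abs_nonneg _) hnn1) (hF2bdd x) (abs_nonneg _) ?_
          exact mul_nonneg hnn1 hRRpos.le
        · rw [hF2supp x hx, mul_zero, abs_zero]
          have hnn1 : (0:ℝ) ≤ a^(2*(b+1))+RR^(2*(b+1)) := by
            linarith [Real.rpow_nonneg hapos.le (2*(b+1)), Real.rpow_nonneg hRRpos.le (2*(b+1))]
          exact mul_nonneg (mul_nonneg hnn1 hRRpos.le) (mul_nonneg (sq_nonneg _) (by linarith))
      · intro x hx
        rw [hF2supp x hx, mul_zero]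
    have hstep3 : (∫ r in Set.Ioi (0:ℝ), r^(2*b)*r*r*T r)
        ≤ 3*Kb*ε₀ * (∫ v in Set.Ioi (0:ℝ), v^(2*(b+1))*v*F2 v) := by
      have ha2 : 0 < a/2 := by linarith
      have hHmeas : Measurable fun q : ℝ × ℝ =>
          (if q.2 ∈ Set.Icc ((1-ε₀)*q.1) ((1+ε₀)*q.1)
            then q.1^(2*b)*q.1*q.1 else 0) * F2 q.2 := by
        refine Measurable.mul (Measurable.ite ?_
          ((((hrpm (2*b)).comp measurable_fst).mul measurable_fst).mul measurable_fst)
          measurable_const) (hF2meas.comp measurable_snd)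
        have hset : {q : ℝ × ℝ | q.2 ∈ Set.Icc ((1-ε₀)*q.1) ((1+ε₀)*q.1)}
            = {q : ℝ × ℝ | (1-ε₀)*q.1 ≤ q.2} ∩ {q : ℝ × ℝ | q.2 ≤ (1+ε₀)*q.1} := by
          ext q; simp [Set.mem_Icc]
        rw [hset]
        exact (measurableSet_le (measurable_fst.const_mul _) measurable_snd).inter
          (measurableSet_le measurable_snd (measurable_fst.const_mul _))
      have hHsupp : ∀ q : ℝ × ℝ, q ∉ (Set.Icc (a/2) (2*RR)) ×ˢ (Set.Icc a RR) →
          (if q.2 ∈ Set.Icc ((1-ε₀)*q.1) ((1+ε₀)*q.1)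
            then q.1^(2*b)*q.1*q.1 else 0) * F2 q.2 = 0 := by
        intro q hq
        by_cases hv : q.2 ∈ Set.Icc a RR
        · by_cases hc : q.2 ∈ Set.Icc ((1-ε₀)*q.1) ((1+ε₀)*q.1)
          · exfalso
            rcases Set.mem_Icc.1 hc with ⟨hc1, hc2⟩
            rcases Set.mem_Icc.1 hv with ⟨hv1, hv2⟩
            have hxpos : 0 < q.1 := by nlinarith
            refine hq (Set.mem_prod.2 ⟨Set.mem_Icc.2 ⟨?_, ?_⟩, hv⟩)
            · nlinarith [mul_nonneg hxpos.le (by linarith : (0:ℝ) ≤ 1/2 - ε₀)]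
            · nlinarith [mul_nonneg hxpos.le (by linarith : (0:ℝ) ≤ 1/2 - ε₀)]
          · rw [if_neg hc, zero_mul]
        · rw [hF2supp _ hv, mul_zero]
      have hHbdd : ∀ q : ℝ × ℝ,
          |(if q.2 ∈ Set.Icc ((1-ε₀)*q.1) ((1+ε₀)*q.1)
            then q.1^(2*b)*q.1*q.1 else 0) * F2 q.2|
          ≤ (((a/2)^(2*b)+(2*RR)^(2*b))*(2*RR)*(2*RR))*(Mr^2*(2*RR)) := by
        intro q
        have hnn1 : (0:ℝ) ≤ (a/2)^(2*b)+(2*RR)^(2*b) := by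
          linarith [Real.rpow_nonneg ha2.le (2*b),
            Real.rpow_nonneg (by linarith : (0:ℝ) ≤ 2*RR) (2*b)]
        have hM2 : (0:ℝ) ≤ Mr^2*(2*RR) := mul_nonneg (sq_nonneg _) (by linarith)
        by_cases hq : q ∈ (Set.Icc (a/2) (2*RR)) ×ˢ (Set.Icc a RR)
        · rcases Set.mem_prod.1 hq with ⟨hq1, hq2⟩
          rw [abs_mul]
          have h1 : |(if q.2 ∈ Set.Icc ((1-ε₀)*q.1) ((1+ε₀)*q.1)
              then q.1^(2*b)*q.1*q.1 else 0)| ≤ ((a/2)^(2*b)+(2*RR)^(2*b))*(2*RR)*(2*RR) := by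
            by_cases hc : q.2 ∈ Set.Icc ((1-ε₀)*q.1) ((1+ε₀)*q.1)
            · rw [if_pos hc, abs_mul, abs_mul]
              have hx1 : |q.1 ^ (2*b)| ≤ (a/2)^(2*b)+(2*RR)^(2*b) := by
                rw [abs_of_nonneg (Real.rpow_nonneg (by linarith [hq1.1]) _)]
                exact rpow_le_add_of_mem ha2 hq1.1 hq1.2
              have hx2 : |q.1| ≤ 2*RR := abs_le.2 ⟨by linarith [hq1.1], hq1.2⟩
              exact mul_le_mul (mul_le_mul hx1 hx2 (abs_nonneg _) hnn1) hx2 (abs_nonneg _)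
                (mul_nonneg hnn1 (by linarith))
            · rw [if_neg hc, abs_zero]
              exact mul_nonneg (mul_nonneg hnn1 (by linarith)) (by linarith)
          exact mul_le_mul h1 (hF2bdd q.2) (abs_nonneg _)
            (mul_nonneg (mul_nonneg hnn1 (by linarith)) (by linarith))
        · rw [hHsupp q hq, abs_zero]
          exact mul_nonneg (mul_nonneg (mul_nonneg hnn1 (by linarith)) (by linarith)) hM2
      have hHint : Integrable (Function.uncurry fun x v : ℝ =>
          (if v ∈ Set.Icc ((1-ε₀)*x) ((1+ε₀)*x) then x^(2*b)*x*x else 0) * F2 v)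
          ((volume.restrict (Set.Ioi 0)).prod volume) :=
        integrable_prod_of_bdd_supp hHmeas measurableSet_Icc measurableSet_Icc
          (hIoiIccFin (a/2) (2*RR)) (hIccFin a RR) hHbdd hHsupp
      have hrw : ∀ x : ℝ, x^(2*b)*x*x*T x = ∫ v : ℝ,
          (if v ∈ Set.Icc ((1-ε₀)*x) ((1+ε₀)*x) then x^(2*b)*x*x else 0) * F2 v := by
        intro x
        simp only [hTdef]
        rw [← integral_const_mul]
        congr 1; funext v
        by_cases h : v ∈ Set.Icc ((1-ε₀)*x) ((1+ε₀)*x)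
        · rw [if_pos h, if_pos h]
        · rw [if_neg h, if_neg h, mul_zero, zero_mul]
      calc (∫ r in Set.Ioi (0:ℝ), r^(2*b)*r*r*T r)
          = ∫ x in Set.Ioi (0:ℝ), ∫ v : ℝ,
              (if v ∈ Set.Icc ((1-ε₀)*x) ((1+ε₀)*x) then x^(2*b)*x*x else 0) * F2 v :=
            integral_congr_ae (Filter.Eventually.of_forall hrw)
        _ = ∫ v : ℝ, ∫ x in Set.Ioi (0:ℝ),
              (if v ∈ Set.Icc ((1-ε₀)*x) ((1+ε₀)*x) then x^(2*b)*x*x else 0) * F2 v :=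
            integral_integral_swap hHint
        _ ≤ ∫ v : ℝ, 3*Kb*ε₀*(v^(2*(b+1))*v*F2 v) := by
            refine integral_mono_of_nonneg (Filter.Eventually.of_forall fun v => ?_)
              (hintX2.const_mul _) (Filter.Eventually.of_forall fun v => ?_)
            · refine setIntegral_nonneg measurableSet_Ioi fun x hx => ?_
              refine mul_nonneg ?_ (hF2nonneg v)
              by_cases h : v ∈ Set.Icc ((1-ε₀)*x) ((1+ε₀)*x)
              · rw [if_pos h]
                have hx0 : (0:ℝ) < x := hx
                exact mul_nonneg (mul_nonneg (Real.rpow_nonneg hx0.le _) hx0.le) hx0.le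
              · rw [if_neg h]
            · by_cases hv : v ∈ Set.Icc a RR
              · have hv0 : 0 < v := lt_of_lt_of_le hapos hv.1
                have hJ : (∫ x in Set.Ioi (0:ℝ),
                    (if v ∈ Set.Icc ((1-ε₀)*x) ((1+ε₀)*x) then x^(2*b)*x*x else 0))
                    ≤ 3*Kb*ε₀*(v^(2*(b+1))*v) := by
                  have hptr : ∀ x ∈ Set.Ioi (0:ℝ),
                      (if v ∈ Set.Icc ((1-ε₀)*x) ((1+ε₀)*x) then x^(2*b)*x*x else 0)
                      ≤ Set.indicator (Set.Icc (v/(1+ε₀)) (v/(1-ε₀)))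
                          (fun _ => Kb*(v^(2*b)*v*v)) x := by
                    intro x hx
                    have hx0 : (0:ℝ) < x := hx
                    by_cases hc : v ∈ Set.Icc ((1-ε₀)*x) ((1+ε₀)*x)
                    · rcases Set.mem_Icc.1 hc with ⟨hc1, hc2⟩
                      have hxmem : x ∈ Set.Icc (v/(1+ε₀)) (v/(1-ε₀)) := by
                        rw [Set.mem_Icc]
                        constructor
                        · rw [div_le_iff₀ (by linarith)]; nlinarith
                        · rw [le_div_iff₀ (by linarith)]; nlinarith
                      rw [if_pos hc, Set.indicator_of_mem hxmem]
                      have h2v : x ≤ 2*v := by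
                        nlinarith [mul_nonneg hx0.le (by linarith : (0:ℝ) ≤ 1/2 - ε₀)]
                      have hv2 : (1/2)*v ≤ x := by
                        nlinarith [mul_nonneg hx0.le (by linarith : (0:ℝ) ≤ 1/2 - ε₀)]
                      have hrpow : x^(2*b) ≤ ((2:ℝ)^(2*b) + (1/2:ℝ)^(2*b)) * v^(2*b) := by
                        rcases le_or_gt 0 (2*b) with hb2 | hb2
                        · have hle : x^(2*b) ≤ (2*v)^(2*b) :=
                            Real.rpow_le_rpow hx0.le h2v hb2
                          rw [Real.mul_rpow (by norm_num) hv0.le] at hle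
                          nlinarith [Real.rpow_nonneg hv0.le (2*b),
                            Real.rpow_pos_of_pos (show (0:ℝ) < 1/2 by norm_num) (2*b)]
                        · have hle : x^(2*b) ≤ ((1/2:ℝ)*v)^(2*b) :=
                            Real.rpow_le_rpow_of_nonpos (by positivity) hv2 hb2.le
                          rw [Real.mul_rpow (by norm_num) hv0.le] at hle
                          nlinarith [Real.rpow_nonneg hv0.le (2*b),
                            Real.rpow_pos_of_pos (show (0:ℝ) < 2 by norm_num) (2*b)]
                      have hrr2 : x*x ≤ (2*v)*(2*v) := by nlinarith
                      calc x^(2*b)*x*x = x^(2*b)*(x*x) := by ring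
                        _ ≤ (((2:ℝ)^(2*b) + (1/2:ℝ)^(2*b)) * v^(2*b)) * ((2*v)*(2*v)) :=
                            mul_le_mul hrpow hrr2 (mul_nonneg hx0.le hx0.le)
                              (mul_nonneg (by positivity) (Real.rpow_nonneg hv0.le _))
                        _ = Kb*(v^(2*b)*v*v) := by rw [hKbdef]; ring
                    · rw [if_neg hc]
                      refine Set.indicator_nonneg (fun y _ => ?_) x
                      exact mul_nonneg hKbpos.le (mul_nonneg (mul_nonneg
                        (Real.rpow_nonneg hv0.le _) hv0.le) hv0.le)
                  have hgind : Integrable (Set.indicator (Set.Icc (v/(1+ε₀)) (v/(1-ε₀)))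
                      (fun _ => Kb*(v^(2*b)*v*v))) (volume.restrict (Set.Ioi 0)) :=
                    (integrable_indicator_iff measurableSet_Icc).2
                      (integrableOn_const (hIoiIccFin _ _).ne)
                  have hJle := integral_mono_of_nonneg (μ := volume.restrict (Set.Ioi 0))
                    ((ae_restrict_iff' measurableSet_Ioi).2
                      (Filter.Eventually.of_forall fun x hx => by
                        by_cases hc : v ∈ Set.Icc ((1-ε₀)*x) ((1+ε₀)*x)
                        · rw [if_pos hc]
                          have hx0 : (0:ℝ) < x := hx
                          exact mul_nonneg (mul_nonneg (Real.rpow_nonneg hx0.le _) hx0.le) hx0.le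
                        · exact le_of_eq (if_neg hc).symm))
                    hgind
                    ((ae_restrict_iff' measurableSet_Ioi).2
                      (Filter.Eventually.of_forall hptr))
                  refine hJle.trans ?_
                  rw [integral_indicator_const _ measurableSet_Icc, smul_eq_mul]
                  have htoReal : ((volume.restrict (Set.Ioi (0:ℝ)))
                      (Set.Icc (v/(1+ε₀)) (v/(1-ε₀)))).toReal ≤ 3*ε₀*v := by
                    have hle1 : ((volume.restrict (Set.Ioi (0:ℝ)))
                        (Set.Icc (v/(1+ε₀)) (v/(1-ε₀))))
                        ≤ volume (Set.Icc (v/(1+ε₀)) (v/(1-ε₀))) := by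
                      rw [Measure.restrict_apply measurableSet_Icc]
                      exact measure_mono Set.inter_subset_left
                    refine le_trans (ENNReal.toReal_mono (by simp [Real.volume_Icc]) hle1) ?_
                    rw [Real.volume_Icc]
                    have hlu : v/(1+ε₀) ≤ v/(1-ε₀) := by
                      rw [div_le_div_iff₀ (by linarith) (by linarith)]
                      nlinarith
                    rw [ENNReal.toReal_ofReal (by linarith)]
                    rw [div_sub_div _ _ (by intro h; linarith [h] : (1:ℝ)-ε₀ ≠ 0)
                      (by intro h; linarith [h] : (1:ℝ)+ε₀ ≠ 0), div_le_iff₀ (by nlinarith)]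
                    have hkey2 : (0:ℝ) ≤ ε₀*v*(1-3*ε₀^2) :=
                      mul_nonneg (mul_nonneg hε.le hv0.le) (by nlinarith [sq_nonneg ε₀])
                    nlinarith [hkey2]
                  have hcnn : (0:ℝ) ≤ Kb*(v^(2*b)*v*v) :=
                    mul_nonneg hKbpos.le (mul_nonneg (mul_nonneg
                      (Real.rpow_nonneg hv0.le _) hv0.le) hv0.le)
                  calc ((volume.restrict (Set.Ioi (0:ℝ)))
                        (Set.Icc (v/(1+ε₀)) (v/(1-ε₀)))).toReal * (Kb*(v^(2*b)*v*v))
                      ≤ (3*ε₀*v) * (Kb*(v^(2*b)*v*v)) :=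
                        mul_le_mul_of_nonneg_right htoReal hcnn
                    _ = 3*Kb*ε₀*(v^(2*(b+1))*v) := by
                        rw [show (2*(b+1)) = 2*b + 2 by ring, Real.rpow_add hv0,
                          show ((2:ℝ)) = ((2:ℕ):ℝ) by norm_num, Real.rpow_natCast]
                        ring
                calc (∫ x in Set.Ioi (0:ℝ),
                    (if v ∈ Set.Icc ((1-ε₀)*x) ((1+ε₀)*x) then x^(2*b)*x*x else 0) * F2 v)
                    = (∫ x in Set.Ioi (0:ℝ),
                        (if v ∈ Set.Icc ((1-ε₀)*x) ((1+ε₀)*x) then x^(2*b)*x*x else 0)) * F2 v :=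
                      integral_mul_const _ _
                  _ ≤ (3*Kb*ε₀*(v^(2*(b+1))*v)) * F2 v :=
                      mul_le_mul_of_nonneg_right hJ (hF2nonneg v)
                  _ = 3*Kb*ε₀*(v^(2*(b+1))*v*F2 v) := by ring
              · beta_reduce
                rw [hF2supp v hv]
                simp
        _ = 3*Kb*ε₀ * (∫ v : ℝ, v^(2*(b+1))*v*F2 v) := integral_const_mul _ _
        _ = 3*Kb*ε₀ * (∫ v in Set.Ioi (0:ℝ), v^(2*(b+1))*v*F2 v) := by
            congr 1
            have hvan0 : ∀ w : ℝ, w ∉ Set.Ioi (0:ℝ) → w^(2*(b+1))*w*F2 w = 0 := fun w hw => by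
              rw [hF2supp w (fun hmem => hw (Set.mem_Ioi.2 (lt_of_lt_of_le hapos hmem.1))),
                mul_zero]
            rw [← setIntegral_eq_integral_of_forall_compl_eq_zero hvan0]
    have hstep4 : (∫ r in Set.Ioi (0:ℝ), r^(2*b)*r*G1 r)
        + (∫ v in Set.Ioi (0:ℝ), v^(2*(b+1))*v*F2 v)
        ≤ ∫ r in Set.Ioi (0:ℝ), ∫ φ : ℝ,
            r ^ (2 * (b + 1)) * (|dphi W (φ, r, z) / r| ^ 2 + |dr W (φ, r, z)| ^ 2 +
              ∑ ξ, |dz ξ W (φ, r, z)| ^ 2) * r := by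
      rw [← integral_add hintG hintX2.integrableOn]
      refine integral_mono_of_nonneg
        ((ae_restrict_iff' measurableSet_Ioi).2 (Filter.Eventually.of_forall fun r hr => ?_))
        (hB2innerInt z)
        ((ae_restrict_iff' measurableSet_Ioi).2 (Filter.Eventually.of_forall fun r hr => ?_))
      · have hr0 : (0:ℝ) < r := hr
        exact add_nonneg
          (mul_nonneg (mul_nonneg (Real.rpow_nonneg hr0.le _) hr0.le) (hG1nonneg r))
          (mul_nonneg (mul_nonneg (Real.rpow_nonneg hr0.le _) hr0.le) (hF2nonneg r))
      · have hr0 : (0:ℝ) < r := hr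
        have hc1 : Continuous fun φ : ℝ => ((φ, r, z) : ℝ×ℝ×(Fin m → ℝ)) := by fun_prop
        have hint1φ : Integrable (fun φ : ℝ => r^(2*b)*r*(dphi W (φ, r, z))^2) volume := by
          refine Continuous.integrable_of_hasCompactSupport
            (continuous_const.mul ((hdphiC.comp hc1).pow 2)) ?_
          refine HasCompactSupport.intro (isCompact_Icc (a := -RR) (b := RR)) fun φ hφ => ?_
          have hp : (φ, r, z) ∉ tsupport W := fun hmem =>
            hφ ⟨(hKmem _ _ _ hmem).1, (hKmem _ _ _ hmem).2.1⟩
          rw [dphi_zero hp]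
          simp
        have hint2φ : Integrable (fun φ : ℝ => r^(2*(b+1))*r*(dr W (φ, r, z))^2) volume := by
          refine Continuous.integrable_of_hasCompactSupport
            (continuous_const.mul ((hdrC.comp hc1).pow 2)) ?_
          refine HasCompactSupport.intro (isCompact_Icc (a := -RR) (b := RR)) fun φ hφ => ?_
          have hp : (φ, r, z) ∉ tsupport W := fun hmem =>
            hφ ⟨(hKmem _ _ _ hmem).1, (hKmem _ _ _ hmem).2.1⟩
          rw [dr_zero hp]
          simp
        have heq : r^(2*b)*r*G1 r + r^(2*(b+1))*r*F2 r
            = ∫ φ : ℝ, (r^(2*b)*r*(dphi W (φ, r, z))^2 + r^(2*(b+1))*r*(dr W (φ, r, z))^2) := by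
          rw [integral_add hint1φ hint2φ, integral_const_mul, integral_const_mul]
        beta_reduce
        rw [heq]
        have hfullcont : Continuous fun φ : ℝ =>
            r ^ (2 * (b + 1)) * (|dphi W (φ, r, z) / r| ^ 2 + |dr W (φ, r, z)| ^ 2 +
              ∑ ξ, |dz ξ W (φ, r, z)| ^ 2) * r :=
          (continuous_const.mul
            ((((((hdphiC.comp hc1).div_const r).abs.pow 2).add
              ((hdrC.comp hc1).abs.pow 2)).add (hSZC.comp hc1)))).mul continuous_const
        have hfullint : Integrable (fun φ : ℝ =>
            r ^ (2 * (b + 1)) * (|dphi W (φ, r, z) / r| ^ 2 + |dr W (φ, r, z)| ^ 2 +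
              ∑ ξ, |dz ξ W (φ, r, z)| ^ 2) * r) volume := by
          refine Continuous.integrable_of_hasCompactSupport hfullcont ?_
          refine HasCompactSupport.intro (isCompact_Icc (a := -RR) (b := RR)) fun φ hφ => ?_
          have hp : (φ, r, z) ∉ tsupport W := fun hmem =>
            hφ ⟨(hKmem _ _ _ hmem).1, (hKmem _ _ _ hmem).2.1⟩
          exact hFULL0 z r φ hp
        refine integral_mono_of_nonneg (Filter.Eventually.of_forall fun φ => ?_) hfullint
          (Filter.Eventually.of_forall fun φ => ?_)
        · have h1 : (0:ℝ) ≤ r^(2*b) := Real.rpow_nonneg hr0.le _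
          have h2 : (0:ℝ) ≤ r^(2*(b+1)) := Real.rpow_nonneg hr0.le _
          have h3 := sq_nonneg (dphi W (φ, r, z))
          have h4 := sq_nonneg (dr W (φ, r, z))
          positivity
        · have hS2 : 0 ≤ ∑ ξ, (dz ξ W (φ, r, z))^2 :=
            Finset.sum_nonneg fun ξ _ => sq_nonneg _
          have he : r^(2*(b+1)) = r^(2*b)*r^2 := by
            rw [show (2*(b+1)) = 2*b + 2 by ring, Real.rpow_add hr0,
              show ((2:ℝ)) = ((2:ℕ):ℝ) by norm_num, Real.rpow_natCast]
          simp only [abs_div, div_pow, sq_abs]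
          rw [he]
          have hr2 : (r:ℝ)^2 ≠ 0 := pow_ne_zero 2 hr0.ne'
          have hexp : r^(2*b)*r^2*((dphi W (φ, r, z))^2/r^2 + (dr W (φ, r, z))^2
                + (∑ ξ, (dz ξ W (φ, r, z))^2))*r
              = r^(2*b)*r*(dphi W (φ, r, z))^2 + r^(2*b)*r^2*r*(dr W (φ, r, z))^2
                + r^(2*b)*r^2*r*(∑ ξ, (dz ξ W (φ, r, z))^2) := by
            field_simp
          rw [hexp]
          have hlast : 0 ≤ r^(2*b)*r^2*r*(∑ ξ, (dz ξ W (φ, r, z))^2) :=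
            mul_nonneg (mul_nonneg (mul_nonneg (Real.rpow_nonneg hr0.le _)
              (sq_nonneg r)) hr0.le) hS2
          linarith
    have hI1nn : 0 ≤ ∫ r in Set.Ioi (0:ℝ), r^(2*b)*r*G1 r :=
      setIntegral_nonneg measurableSet_Ioi fun r hr =>
        mul_nonneg (mul_nonneg (Real.rpow_nonneg (le_of_lt hr) _) (le_of_lt hr)) (hG1nonneg r)
    have hI2nn : 0 ≤ ∫ v in Set.Ioi (0:ℝ), v^(2*(b+1))*v*F2 v :=
      setIntegral_nonneg measurableSet_Ioi fun v hv =>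
        mul_nonneg (mul_nonneg (Real.rpow_nonneg (le_of_lt hv) _) (le_of_lt hv)) (hF2nonneg v)
    have hconstnn : (0:ℝ) ≤ (4 + 6*Kb)*ε₀^2 := mul_nonneg (by linarith) (sq_nonneg _)
    calc (∫ r in Set.Ioi (0 : ℝ), ∫ φ : ℝ,
        r ^ (2 * b) * |W (φ, r, z) - W (φ + Φ' (r, z), r + R' (r, z), z)| ^ 2 * r)
        ≤ 4*ε₀^2 * (∫ r in Set.Ioi (0:ℝ), r^(2*b)*r*G1 r)
          + 2*ε₀ * (∫ r in Set.Ioi (0:ℝ), r^(2*b)*r*r*T r) := hstep2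
      _ ≤ 4*ε₀^2 * (∫ r in Set.Ioi (0:ℝ), r^(2*b)*r*G1 r)
          + 2*ε₀ * (3*Kb*ε₀ * (∫ v in Set.Ioi (0:ℝ), v^(2*(b+1))*v*F2 v)) := by
          have h := mul_le_mul_of_nonneg_left hstep3 (by linarith : (0:ℝ) ≤ 2*ε₀)
          linarith
      _ ≤ (4 + 6*Kb)*ε₀^2 * ((∫ r in Set.Ioi (0:ℝ), r^(2*b)*r*G1 r)
          + (∫ v in Set.Ioi (0:ℝ), v^(2*(b+1))*v*F2 v)) := by
          nlinarith [mul_nonneg (mul_nonneg hKbpos.le (sq_nonneg ε₀)) hI1nn,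
            mul_nonneg (sq_nonneg ε₀) hI2nn]
      _ ≤ (4 + 6*Kb)*ε₀^2 * (∫ r in Set.Ioi (0 : ℝ), ∫ φ : ℝ,
            r ^ (2 * (b + 1)) * (|dphi W (φ, r, z) / r| ^ 2 + |dr W (φ, r, z)| ^ 2 +
              ∑ ξ, |dz ξ W (φ, r, z)| ^ 2) * r) :=
          mul_le_mul_of_nonneg_left hstep4 hconstnn

  have hB2int : Integrable (fun z : Fin m → ℝ => ∫ r in Set.Ioi (0 : ℝ), ∫ φ : ℝ,
      r ^ (2 * (b + 1)) * (|dphi W (φ, r, z) / r| ^ 2 + |dr W (φ, r, z)| ^ 2 +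
        ∑ ξ, |dz ξ W (φ, r, z)| ^ 2) * r) volume := by
    have hmeasz : AEStronglyMeasurable (fun z : Fin m → ℝ => ∫ r in Set.Ioi (0 : ℝ), ∫ φ : ℝ,
        r ^ (2 * (b + 1)) * (|dphi W (φ, r, z) / r| ^ 2 + |dr W (φ, r, z)| ^ 2 +
          ∑ ξ, |dz ξ W (φ, r, z)| ^ 2) * r) volume :=
      (hFrSM.integral_prod_right' (ν := volume.restrict (Set.Ioi 0))).aestronglyMeasurable
    have hsuppz : ∀ z : Fin m → ℝ, z ∉ Metric.closedBall (0 : Fin m → ℝ) RR →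
        (∫ r in Set.Ioi (0 : ℝ), ∫ φ : ℝ,
          r ^ (2 * (b + 1)) * (|dphi W (φ, r, z) / r| ^ 2 + |dr W (φ, r, z)| ^ 2 +
            ∑ ξ, |dz ξ W (φ, r, z)| ^ 2) * r) = 0 := by
      intro z hz
      have hzn : ¬ (‖z‖ ≤ RR) := fun hle => hz (Metric.mem_closedBall.2 (by rwa [dist_zero_right]))
      refine integral_eq_zero_of_eq_zero fun r => integral_eq_zero_of_eq_zero fun φ =>
        hFULL0 z r φ fun hmem => hzn (hKmem _ _ _ hmem).2.2.2.2
    have hbz : ∀ z : Fin m → ℝ, |∫ r in Set.Ioi (0 : ℝ), ∫ φ : ℝ,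
        r ^ (2 * (b + 1)) * (|dphi W (φ, r, z) / r| ^ 2 + |dr W (φ, r, z)| ^ 2 +
          ∑ ξ, |dz ξ W (φ, r, z)| ^ 2) * r| ≤ (Cb * (2*RR)) * (RR - a) := fun z =>
      abs_setIntegral_le_of_bdd_supp haRR (mul_nonneg hCb0 (by linarith)) (hFr0 z) (hFrbound z)
    exact integrable_of_bdd_supp hmeasz measurableSet_closedBall measure_closedBall_lt_top hbz hsuppz
  have hB1nonneg : 0 ≤ ∫ z : Fin m → ℝ, ∫ r in Set.Ioi (0:ℝ), ∫ φ : ℝ,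
      r ^ (2*b) * |W (φ,r,z)| ^ 2 * r :=
    integral_nonneg fun z => setIntegral_nonneg measurableSet_Ioi fun r hr =>
      integral_nonneg fun φ => by
        have h0 : (0:ℝ) ≤ r ^ (2*b) := Real.rpow_nonneg (le_of_lt (Set.mem_Ioi.1 hr)) _
        have h1 : (0:ℝ) ≤ r := le_of_lt (Set.mem_Ioi.1 hr)
        positivity
  have hLHSnonneg : ∀ z : Fin m → ℝ, 0 ≤ ∫ r in Set.Ioi (0:ℝ), ∫ φ : ℝ,
      r ^ (2*b) * |W (φ,r,z) - W (φ + Φ' (r,z), r + R' (r,z), z)| ^ 2 * r := fun z =>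
    setIntegral_nonneg measurableSet_Ioi fun r hr => integral_nonneg fun φ => by
      have h0 : (0:ℝ) ≤ r ^ (2*b) := Real.rpow_nonneg (le_of_lt (Set.mem_Ioi.1 hr)) _
      have h1 : (0:ℝ) ≤ r := le_of_lt (Set.mem_Ioi.1 hr)
      positivity
  have hconst0 : (0:ℝ) ≤ (4 + 6*Kb) * ε₀^2 := mul_nonneg (by linarith) (sq_nonneg _)
  calc (∫ z : Fin m → ℝ, ∫ r in Set.Ioi (0 : ℝ), ∫ φ : ℝ,
          r ^ (2 * b) * |W (φ, r, z) - W (φ + Φ' (r, z), r + R' (r, z), z)| ^ 2 * r)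
      ≤ ∫ z : Fin m → ℝ, (4 + 6 * Kb) * ε₀ ^ 2 * (∫ r in Set.Ioi (0 : ℝ), ∫ φ : ℝ,
          r ^ (2 * (b + 1)) * (|dphi W (φ, r, z) / r| ^ 2 + |dr W (φ, r, z)| ^ 2 +
            ∑ ξ, |dz ξ W (φ, r, z)| ^ 2) * r) :=
        integral_mono_of_nonneg (Filter.Eventually.of_forall hLHSnonneg)
          (hB2int.const_mul _) (Filter.Eventually.of_forall hkey)
    _ = (4 + 6 * Kb) * ε₀ ^ 2 * (∫ z : Fin m → ℝ, ∫ r in Set.Ioi (0 : ℝ), ∫ φ : ℝ,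
          r ^ (2 * (b + 1)) * (|dphi W (φ, r, z) / r| ^ 2 + |dr W (φ, r, z)| ^ 2 +
            ∑ ξ, |dz ξ W (φ, r, z)| ^ 2) * r) := integral_const_mul _ _
    _ ≤ (4 + 6 * Kb) * ε₀ ^ 2 *
          ((∫ z : Fin m → ℝ, ∫ r in Set.Ioi (0 : ℝ), ∫ φ : ℝ,
              r ^ (2 * b) * |W (φ, r, z)| ^ 2 * r) +
           (∫ z : Fin m → ℝ, ∫ r in Set.Ioi (0 : ℝ), ∫ φ : ℝ,
              r ^ (2 * (b + 1)) * (|dphi W (φ, r, z) / r| ^ 2 + |dr W (φ, r, z)| ^ 2 +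
                ∑ ξ, |dz ξ W (φ, r, z)| ^ 2) * r)) := by
        apply mul_le_mul_of_nonneg_left _ hconst0
        linarith
end

section
/- Let m ∈ ℕ, b ∈ ℝ. Then there exists C > 0, depending only on b, such that the following holds. Let Φ' : (0,∞) × ℝ^m → ℝ be any function, and let R' : (0,∞) × ℝ^m → ℝ be continuously differentiable in r with |R'(r,z)| ≤ r/2 and |∂_r R'(r,z)| ≤ 1/2 for all r > 0 and z ∈ ℝ^m. Then for every nonnegative measurable function W : ℝ × (0,∞) × ℝ^m → ℝ, ∫_{ℝ^m} ∫_0^∞ ∫_ℝ r^{2b} W(φ + Φ'(r,z), r + R'(r,z), z)² · r dφ dr dz ≤ C · ∫_{ℝ^m} ∫_0^∞ ∫_ℝ r^{2b} W(φ, r, z)² · r dφ dr dz (both sides possibly infinite). -/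
open MeasureTheory

/-- 1D version of the lintegral change of variables formula. -/
theorem stmt10_cov {s : Set ℝ} {f f' : ℝ → ℝ} (hs : MeasurableSet s)
    (hf' : ∀ x ∈ s, HasDerivWithinAt f (f' x) s x) (hf : Set.InjOn f s) (g : ℝ → ENNReal) :
    ∫⁻ x in f '' s, g x = ∫⁻ x in s, ENNReal.ofReal |f' x| * g (f x) := by
  simpa only [ContinuousLinearMap.det_toSpanSingleton] using
    lintegral_image_eq_lintegral_abs_det_fderiv_mul volume hs
      (fun x hx => (hf' x hx).hasFDerivWithinAt) hf g

theorem stmt10_rpow {b r ρ : ℝ} (hr : 0 < r) (hρ : 0 < ρ) (h1 : r ≤ 2 * ρ) (h2 : ρ ≤ 2 * r) :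
    r ^ b ≤ 2 ^ |b| * ρ ^ b := by
  rcases le_or_gt 0 b with hb | hb
  · calc r ^ b ≤ (2 * ρ) ^ b := Real.rpow_le_rpow hr.le h1 hb
    _ = 2 ^ b * ρ ^ b := Real.mul_rpow (by norm_num) hρ.le
    _ ≤ 2 ^ |b| * ρ ^ b :=
        mul_le_mul_of_nonneg_right
          (Real.rpow_le_rpow_of_exponent_le one_le_two (le_abs_self b))
          (Real.rpow_nonneg hρ.le b)
  · have h3 : ρ / 2 ≤ r := by linarith
    calc r ^ b ≤ (ρ / 2) ^ b :=
        Real.rpow_le_rpow_of_nonpos (by positivity) h3 hb.le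
    _ = ρ ^ b / 2 ^ b := Real.div_rpow hρ.le (by norm_num) b
    _ = 2 ^ (-b) * ρ ^ b := by
        rw [Real.rpow_neg (by norm_num)]
        ring
    _ = 2 ^ |b| * ρ ^ b := by rw [abs_of_neg hb]

theorem stmt10 (m : ℕ) (b : ℝ) :
    ∃ C > (0 : ℝ), ∀ Φ' R' : ℝ × (Fin m → ℝ) → ℝ,
      -- `R'` is continuously differentiable in `r` on `(0, ∞)`
      (∀ z : Fin m → ℝ, ContDiffOn ℝ 1 (fun r => R' (r, z)) (Set.Ioi (0 : ℝ))) →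
      (∀ r : ℝ, 0 < r → ∀ z : Fin m → ℝ, |R' (r, z)| ≤ r / 2) →
      (∀ r : ℝ, 0 < r → ∀ z : Fin m → ℝ, |deriv (fun s => R' (s, z)) r| ≤ 1 / 2) →
      ∀ W : ℝ × ℝ × (Fin m → ℝ) → ℝ, Measurable W → (∀ p, 0 ≤ W p) →
        (∫⁻ z : Fin m → ℝ, ∫⁻ r in Set.Ioi (0 : ℝ), ∫⁻ φ : ℝ,
            ENNReal.ofReal
              (r ^ (2 * b) * W (φ + Φ' (r, z), r + R' (r, z), z) ^ 2 * r)) ≤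
        ENNReal.ofReal C *
          (∫⁻ z : Fin m → ℝ, ∫⁻ r in Set.Ioi (0 : ℝ), ∫⁻ φ : ℝ,
            ENNReal.ofReal (r ^ (2 * b) * W (φ, r, z) ^ 2 * r)) := by
  set e : ℝ := 2 * b + 1 with hee
  set C : ℝ := 2 * 2 ^ |e| with hC
  have hCpos : 0 < C := by positivity
  refine ⟨C, hCpos, ?_⟩
  intro Φ' R' hC1 hRb hRd W hWm hW0
  have key : ∀ z : Fin m → ℝ,
      (∫⁻ r in Set.Ioi (0 : ℝ), ∫⁻ φ : ℝ,
        ENNReal.ofReal (r ^ (2 * b) * W (φ + Φ' (r, z), r + R' (r, z), z) ^ 2 * r))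
      ≤ ENNReal.ofReal C *
        ∫⁻ r in Set.Ioi (0 : ℝ), ∫⁻ φ : ℝ,
          ENNReal.ofReal (r ^ (2 * b) * W (φ, r, z) ^ 2 * r) := by
    intro z
    set f : ℝ → ℝ := fun r => r + R' (r, z) with hf
    set d : ℝ → ℝ := fun r => deriv (fun s => R' (s, z)) r with hd
    set G : ℝ → ENNReal := fun ρ => ∫⁻ φ : ℝ, ENNReal.ofReal (W (φ, ρ, z) ^ 2) with hG
    -- inner integral computation
    have hinner : ∀ r : ℝ, 0 < r → ∀ ρ c : ℝ,
        (∫⁻ φ : ℝ, ENNReal.ofReal (r ^ (2 * b) * W (φ + c, ρ, z) ^ 2 * r))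
          = ENNReal.ofReal (r ^ e) * G ρ := by
      intro r hr ρ c
      have h1 : ∀ x : ℝ, r ^ (2 * b) * x * r = r ^ e * x := by
        intro x
        rw [hee, Real.rpow_add_one hr.ne']
        ring
      simp_rw [h1, ENNReal.ofReal_mul (Real.rpow_nonneg hr.le e)]
      rw [lintegral_const_mul' _ _ ENNReal.ofReal_ne_top]
      congr 1
      exact lintegral_add_right_eq_self (fun φ => ENNReal.ofReal (W (φ, ρ, z) ^ 2)) c
    -- derivative facts
    have hder : ∀ r ∈ Set.Ioi (0 : ℝ), HasDerivAt f (1 + d r) r := by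
      intro r hr
      have hdiff : DifferentiableAt ℝ (fun s => R' (s, z)) r :=
        ((hC1 z).differentiableOn one_ne_zero).differentiableAt (isOpen_Ioi.mem_nhds hr)
      exact (hasDerivAt_id r).add hdiff.hasDerivAt
    have hdpos : ∀ r ∈ Set.Ioi (0 : ℝ), (1 : ℝ) / 2 ≤ 1 + d r := by
      intro r hr
      have := hRd r hr z
      have := abs_le.mp this
      rw [hd]
      linarith [this.1]
    have hfpos : ∀ r ∈ Set.Ioi (0 : ℝ), 0 < f r := by
      intro r hr
      have := abs_le.mp (hRb r hr z)
      have hr' : (0:ℝ) < r := hr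
      simp only [hf]
      linarith [this.1]
    have hflb : ∀ r ∈ Set.Ioi (0 : ℝ), r ≤ 2 * f r := by
      intro r hr
      have := abs_le.mp (hRb r hr z)
      simp only [hf]; linarith [this.1]
    have hfub : ∀ r ∈ Set.Ioi (0 : ℝ), f r ≤ 2 * r := by
      intro r hr
      have := abs_le.mp (hRb r hr z)
      have hr' : (0:ℝ) < r := hr
      simp only [hf]; linarith [this.2]
    have hmono : StrictMonoOn f (Set.Ioi (0 : ℝ)) := by
      apply strictMonoOn_of_deriv_pos (convex_Ioi 0)
      · exact fun r hr => (hder r hr).continuousAt.continuousWithinAt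
      · intro r hr
        rw [interior_Ioi] at hr
        rw [(hder r hr).deriv]
        linarith [hdpos r hr]
    have himg : f '' Set.Ioi (0 : ℝ) ⊆ Set.Ioi (0 : ℝ) := by
      rintro _ ⟨r, hr, rfl⟩
      exact hfpos r hr
    calc
      (∫⁻ r in Set.Ioi (0 : ℝ), ∫⁻ φ : ℝ,
          ENNReal.ofReal (r ^ (2 * b) * W (φ + Φ' (r, z), r + R' (r, z), z) ^ 2 * r))
        = ∫⁻ r in Set.Ioi (0 : ℝ), ENNReal.ofReal (r ^ e) * G (f r) := by
          apply setLIntegral_congr_fun measurableSet_Ioi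
          intro r hr
          exact hinner r hr (f r) (Φ' (r, z))
      _ ≤ ∫⁻ r in Set.Ioi (0 : ℝ), ENNReal.ofReal C *
            (ENNReal.ofReal |1 + d r| * (ENNReal.ofReal ((f r) ^ e) * G (f r))) := by
          apply lintegral_mono_ae
          rw [ae_restrict_iff' measurableSet_Ioi]
          filter_upwards with r hr
          have hfr : 0 < f r := hfpos r hr
          have habs : |1 + d r| = 1 + d r := abs_of_pos (by linarith [hdpos r hr])
          have h2 : r ^ e ≤ (C * |1 + d r|) * (f r) ^ e := by
            have hrp : r ^ e ≤ 2 ^ |e| * (f r) ^ e :=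
              stmt10_rpow hr hfr (hflb r hr) (hfub r hr)
            have h3 : (1 : ℝ) ≤ 2 * |1 + d r| := by
              rw [habs]; linarith [hdpos r hr]
            have h4 : (0:ℝ) ≤ (f r) ^ e := Real.rpow_nonneg hfr.le e
            have h5 : (0:ℝ) ≤ 2 ^ |e| := by positivity
            calc r ^ e ≤ 2 ^ |e| * (f r) ^ e := hrp
              _ = 1 * (2 ^ |e| * (f r) ^ e) := by ring
              _ ≤ (2 * |1 + d r|) * (2 ^ |e| * (f r) ^ e) := by
                  apply mul_le_mul_of_nonneg_right h3 (by positivity)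
              _ = (C * |1 + d r|) * (f r) ^ e := by rw [hC]; ring
          calc ENNReal.ofReal (r ^ e) * G (f r)
              ≤ ENNReal.ofReal ((C * |1 + d r|) * (f r) ^ e) * G (f r) :=
                mul_le_mul_left (ENNReal.ofReal_le_ofReal h2) _
            _ = ENNReal.ofReal C *
                (ENNReal.ofReal |1 + d r| * (ENNReal.ofReal ((f r) ^ e) * G (f r))) := by
                rw [ENNReal.ofReal_mul (by positivity), ENNReal.ofReal_mul hCpos.le]; ring
      _ = ENNReal.ofReal C * ∫⁻ r in Set.Ioi (0 : ℝ),
            ENNReal.ofReal |1 + d r| * (ENNReal.ofReal ((f r) ^ e) * G (f r)) :=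
          lintegral_const_mul' _ _ ENNReal.ofReal_ne_top
      _ = ENNReal.ofReal C * ∫⁻ ρ in f '' Set.Ioi (0 : ℝ),
            ENNReal.ofReal (ρ ^ e) * G ρ := by
          rw [stmt10_cov measurableSet_Ioi
            (fun r hr => (hder r hr).hasDerivWithinAt)
            hmono.injOn (fun ρ => ENNReal.ofReal (ρ ^ e) * G ρ)]
      _ ≤ ENNReal.ofReal C * ∫⁻ ρ in Set.Ioi (0 : ℝ),
            ENNReal.ofReal (ρ ^ e) * G ρ := by
          gcongr
      _ = ENNReal.ofReal C *
            ∫⁻ r in Set.Ioi (0 : ℝ), ∫⁻ φ : ℝ,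
              ENNReal.ofReal (r ^ (2 * b) * W (φ, r, z) ^ 2 * r) := by
          congr 1
          apply setLIntegral_congr_fun measurableSet_Ioi
          intro r hr
          have := hinner r hr r 0
          simp only [add_zero] at this
          exact this.symm
  calc
    (∫⁻ z : Fin m → ℝ, ∫⁻ r in Set.Ioi (0 : ℝ), ∫⁻ φ : ℝ,
        ENNReal.ofReal (r ^ (2 * b) * W (φ + Φ' (r, z), r + R' (r, z), z) ^ 2 * r))
      ≤ ∫⁻ z : Fin m → ℝ, ENNReal.ofReal C *
          ∫⁻ r in Set.Ioi (0 : ℝ), ∫⁻ φ : ℝ,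
            ENNReal.ofReal (r ^ (2 * b) * W (φ, r, z) ^ 2 * r) := lintegral_mono key
    _ = ENNReal.ofReal C *
          (∫⁻ z : Fin m → ℝ, ∫⁻ r in Set.Ioi (0 : ℝ), ∫⁻ φ : ℝ,
            ENNReal.ofReal (r ^ (2 * b) * W (φ, r, z) ^ 2 * r)) :=
        lintegral_const_mul' _ _ ENNReal.ofReal_ne_top
end
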